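/- arXiv:2405.01357 — 6 statements merged into one kernel-verified Lean document; each statement's English description precedes it below -/
import Mathlib

section
/- Let ω₁, ω₂, ω₃ ∈ ℂ with |ωᵢ| ≤ 1 for i = 1,2,3, and let α₁, α₂, β ∈ ℂ. Consider the upper-triangular matrix T = [[ω₁, α₁, β], [0, ω₂, α₂], [0, 0, ω₃]]. Then ‖T‖ ≤ 1 (operator norm on Euclidean ℂ³) if and only if one of the following holds: (i) |ω₂| < 1, |α₁|² ≤ (1−|ω₁|²)(1−|ω₂|²), |α₂|² ≤ (1−|ω₂|²)(1−|ω₃|²), and |β(1−|ω₂|²) + α₁α₂·conj(ω₂)|² ≤ [(1−|ω₁|²)(1−|ω₂|²) − |α₁|²] · [(1−|ω₂|²)(1−|ω₃|²) − |α₂|²]; or (ii) |ω₂| = 1, α₁ = 0, α₂ = 0, and |β|² ≤ (1−|ω₁|²)(1−|ω₃|²). -/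
open Complex

private lemma disc_aux {A B C : ℝ} (h : ∀ t : ℝ, 0 ≤ A*t^2 - 2*B*t + C) : B^2 ≤ A*C := by
  have h2 := discrim_le_zero (a := A) (b := -(2*B)) (c := C) (fun x => by have := h x; nlinarith)
  unfold discrim at h2; nlinarith

private lemma two_nec {A C : ℝ} {u : ℂ}
    (h : ∀ x z : ℂ, 0 ≤ A * normSq x + C * normSq z + 2*(u * (starRingEnd ℂ) x * z).re) :
    0 ≤ A ∧ 0 ≤ C ∧ normSq u ≤ A * C := by
  have hA : 0 ≤ A := by have := h 1 0; simpa using this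
  have hC : 0 ≤ C := by have := h 0 1; simpa using this
  refine ⟨hA, hC, ?_⟩
  have key : ∀ t : ℝ, 0 ≤ A*t^2 - 2*(normSq u)*t + C*(normSq u) := by
    intro t
    have hh := h (t:ℂ) (-(starRingEnd ℂ) u)
    have e1 : normSq ((t:ℂ)) = t^2 := by simp [normSq_apply]; ring
    have e2 : normSq (-(starRingEnd ℂ) u) = normSq u := by simp
    have e3 : (u * (starRingEnd ℂ) (t:ℂ) * (-(starRingEnd ℂ) u)).re = -(t * normSq u) := by
      simp [Complex.normSq_apply, Complex.mul_re, Complex.mul_im]; ring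
    rw [e1, e2, e3] at hh; linarith
  have hd := disc_aux key
  rcases eq_or_lt_of_le (normSq_nonneg u) with h0 | h0
  · rw [← h0]; positivity
  · nlinarith

private lemma two_suf {A C : ℝ} {u : ℂ} (hA : 0 ≤ A) (hC : 0 ≤ C) (h : normSq u ≤ A*C) :
    ∀ x z : ℂ, 0 ≤ A * normSq x + C * normSq z + 2*(u * (starRingEnd ℂ) x * z).re := by
  intro x z
  have h1 : -(‖u‖ * ‖x‖ * ‖z‖) ≤ (u * (starRingEnd ℂ) x * z).re := by
    have h2 := Complex.abs_re_le_norm (u * (starRingEnd ℂ) x * z)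
    have h3 : ‖u * (starRingEnd ℂ) x * z‖
        = ‖u‖ * ‖x‖ * ‖z‖ := by simp [map_mul]
    rw [h3] at h2
    linarith [(abs_le.mp h2).1]
  have ex : normSq x = ‖x‖ ^ 2 := (Complex.sq_norm x).symm
  have ez : normSq z = ‖z‖ ^ 2 := (Complex.sq_norm z).symm
  have eu : normSq u = ‖u‖ ^ 2 := (Complex.sq_norm u).symm
  rw [ex, ez]; rw [eu] at h
  set X := ‖x‖; set Z := ‖z‖; set U := ‖u‖
  have hX : 0 ≤ X := norm_nonneg x
  have hZ : 0 ≤ Z := norm_nonneg z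
  have hU : 0 ≤ U := norm_nonneg u
  have key : 2*(U*X*Z) ≤ A*X^2 + C*Z^2 := by
    nlinarith [sq_nonneg (A*X^2 - C*Z^2),
      mul_nonneg (mul_nonneg (sub_nonneg.2 h) (sq_nonneg X)) (sq_nonneg Z),
      mul_nonneg (mul_nonneg hU hX) hZ, mul_nonneg hA (sq_nonneg X), mul_nonneg hC (sq_nonneg Z)]
  linarith

private lemma schur (a d e : ℝ) (p q r : ℂ) (x y z : ℂ) :
    d * (a*normSq x + d*normSq y + e*normSq z + 2*(p*(starRingEnd ℂ) x*y).re
      + 2*(q*(starRingEnd ℂ) x*z).re + 2*(r*(starRingEnd ℂ) y*z).re)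
    = normSq ((d:ℂ)*y + (starRingEnd ℂ) p*x + r*z)
      + (a*d - normSq p)*normSq x + (e*d - normSq r)*normSq z
      + 2*(((q*(d:ℂ) - p*r))*(starRingEnd ℂ) x*z).re := by
  simp only [Complex.normSq_apply, Complex.mul_re, Complex.mul_im, Complex.add_re, Complex.add_im,
    Complex.conj_re, Complex.conj_im, Complex.ofReal_re, Complex.ofReal_im, Complex.sub_re,
    Complex.sub_im]
  ring

set_option maxHeartbeats 2000000 in
private lemma nec (ω₁ ω₂ ω₃ α₁ α₂ β : ℂ)
    (hω₁ : normSq ω₁ ≤ 1) (hω₂ : normSq ω₂ ≤ 1) (hω₃ : normSq ω₃ ≤ 1)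
    (H : ∀ x y z : ℂ, normSq (ω₁*x+α₁*y+β*z) + normSq (ω₂*y+α₂*z) + normSq (ω₃*z)
      ≤ normSq x + normSq y + normSq z) :
    ((normSq ω₂ < 1 ∧ normSq α₁ ≤ (1 - normSq ω₁) * (1 - normSq ω₂) ∧
      normSq α₂ ≤ (1 - normSq ω₂) * (1 - normSq ω₃) ∧
      normSq (β * (1 - (normSq ω₂ : ℂ)) + α₁ * α₂ * (starRingEnd ℂ) ω₂) ≤
        ((1 - normSq ω₁) * (1 - normSq ω₂) - normSq α₁) *
        ((1 - normSq ω₂) * (1 - normSq ω₃) - normSq α₂)) ∨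
     (normSq ω₂ = 1 ∧ α₁ = 0 ∧ α₂ = 0 ∧ normSq β ≤ (1 - normSq ω₁) * (1 - normSq ω₃))) := by
  set a := 1 - normSq ω₁ with ha
  set b := 1 - normSq ω₂ with hb
  set c := 1 - normSq ω₃ with hc
  set p := -((starRingEnd ℂ) ω₁ * α₁) with hp
  set q := -((starRingEnd ℂ) ω₁ * β) with hq
  set r := -((starRingEnd ℂ) α₁ * β + (starRingEnd ℂ) ω₂ * α₂) with hr
  set E := β * (1 - (normSq ω₂ : ℂ)) + α₁ * α₂ * (starRingEnd ℂ) ω₂ with hE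
  set d := b - normSq α₁ with hd
  set e := c - normSq β - normSq α₂ with he
  clear_value a b c p q r E d e
  have hF : ∀ x y z : ℂ, 0 ≤ a*normSq x + d*normSq y + e*normSq z
      + 2*(p*(starRingEnd ℂ) x*y).re + 2*(q*(starRingEnd ℂ) x*z).re
      + 2*(r*(starRingEnd ℂ) y*z).re := by
    intro x y z
    have h0 := H x y z
    have hid : (normSq x + normSq y + normSq z)
        - (normSq (ω₁*x+α₁*y+β*z) + normSq (ω₂*y+α₂*z) + normSq (ω₃*z))
        = a*normSq x + d*normSq y + e*normSq z + 2*(p*(starRingEnd ℂ) x*y).re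
          + 2*(q*(starRingEnd ℂ) x*z).re + 2*(r*(starRingEnd ℂ) y*z).re := by
      rw [hd, he, hp, hq, hr, ha, hb, hc]
      simp only [Complex.normSq_apply, Complex.mul_re, Complex.mul_im, Complex.add_re,
        Complex.add_im, Complex.conj_re, Complex.conj_im, Complex.neg_re, Complex.neg_im]
      ring
    linarith [h0, hid.ge, hid.le]
  have H12 : ∀ x y : ℂ, 0 ≤ a*normSq x + d*normSq y + 2*(p*(starRingEnd ℂ) x*y).re := by
    intro x y
    have h0 := hF x y 0
    simp only [normSq_zero, mul_zero, Complex.zero_re, add_zero] at h0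
    exact h0
  have H13 : ∀ x z : ℂ, 0 ≤ a*normSq x + e*normSq z + 2*(q*(starRingEnd ℂ) x*z).re := by
    intro x z
    have h0 := hF x 0 z
    simp only [normSq_zero, mul_zero, zero_mul, map_zero, Complex.zero_re, add_zero, zero_add] at h0
    linarith [h0]
  have H23 : ∀ y z : ℂ, 0 ≤ d*normSq y + e*normSq z + 2*(r*(starRingEnd ℂ) y*z).re := by
    intro y z
    have h0 := hF 0 y z
    simp only [normSq_zero, mul_zero, zero_mul, map_zero, Complex.zero_re, add_zero, zero_add] at h0
    linarith [h0]
  obtain ⟨ha0, hd0, hp2⟩ := two_nec H12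
  obtain ⟨-, he0, hq2⟩ := two_nec H13
  obtain ⟨-, -, hr2⟩ := two_nec H23
  have hnp : normSq p = normSq ω₁ * normSq α₁ := by
    rw [hp]; simp [Complex.normSq_mul]
  have hnq : normSq q = normSq ω₁ * normSq β := by
    rw [hq]; simp [Complex.normSq_mul]
  have hω₁a : normSq ω₁ = 1 - a := by rw [ha]; ring
  have hα₁ab : normSq α₁ ≤ a*b := by
    rw [hnp, hω₁a, hd] at hp2; nlinarith [hp2]
  have H23b : ∀ y z : ℂ, 0 ≤ b*normSq y + (c - normSq α₂)*normSq z
      + 2*((-((starRingEnd ℂ) ω₂*α₂))*(starRingEnd ℂ) y*z).re := by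
    intro y z
    have h0 := H 0 y z
    have hpos := normSq_nonneg (ω₁*0+α₁*y+β*z)
    have hzz : normSq (0:ℂ) = 0 := normSq_zero
    have hid : (normSq y + normSq z) - (normSq (ω₂*y+α₂*z) + normSq (ω₃*z))
        = b*normSq y + (c - normSq α₂)*normSq z
          + 2*((-((starRingEnd ℂ) ω₂*α₂))*(starRingEnd ℂ) y*z).re := by
      rw [hb, hc]
      simp only [Complex.normSq_apply, Complex.mul_re, Complex.mul_im, Complex.add_re,
        Complex.add_im, Complex.conj_re, Complex.conj_im, Complex.neg_re, Complex.neg_im]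
      ring
    linarith [h0, hpos, hid.ge, hid.le, hzz.ge, hzz.le]
  obtain ⟨hb0, -, hrb⟩ := two_nec H23b
  have hω₂b : normSq ω₂ = 1 - b := by rw [hb]; ring
  have hα₂bc : normSq α₂ ≤ b*c := by
    have h5 : normSq (-((starRingEnd ℂ) ω₂*α₂)) = normSq ω₂ * normSq α₂ := by
      simp [Complex.normSq_mul]
    rw [h5, hω₂b] at hrb; nlinarith [hrb]
  rcases eq_or_lt_of_le hb0 with hbz | hbpos
  · right
    have hω₂1 : normSq ω₂ = 1 := by rw [hω₂b, ← hbz]; ring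
    have hα₁0 : α₁ = 0 := by
      have h6 : normSq α₁ ≤ 0 := by rw [hd, ← hbz] at hd0; linarith
      exact normSq_eq_zero.mp (le_antisymm h6 (normSq_nonneg α₁))
    have hdz : d = 0 := by rw [hd, hα₁0, normSq_zero, ← hbz]; ring
    have hα₂0 : α₂ = 0 := by
      have h7 : normSq r ≤ 0 := by rw [hdz, zero_mul] at hr2; exact hr2
      have hr0 : r = 0 := normSq_eq_zero.mp (le_antisymm h7 (normSq_nonneg r))
      have h8 : (starRingEnd ℂ) ω₂ * α₂ = 0 := by
        rw [hr, hα₁0] at hr0; simpa using hr0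
      rcases mul_eq_zero.mp h8 with h9 | h9
      · exfalso
        have h10 : normSq ω₂ = 0 := by
          have := congrArg normSq h9; simpa using this
        rw [hω₂1] at h10; norm_num at h10
      · exact h9
    refine ⟨hω₂1, hα₁0, hα₂0, ?_⟩
    rw [hnq, hω₁a, he, hα₂0, normSq_zero] at hq2
    nlinarith [hq2]
  · left
    have hω₂lt : normSq ω₂ < 1 := by rw [hω₂b]; linarith
    refine ⟨hω₂lt, hα₁ab, hα₂bc, ?_⟩
    rcases eq_or_lt_of_le hd0 with hdz | hdpos
    · -- d = 0
      have hba : b = normSq α₁ := by rw [hd] at hdz; linarith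
      have ha1 : a = 1 := by nlinarith [hα₁ab, hbpos, normSq_nonneg ω₁]
      have hr0 : r = 0 := by
        have h7 : normSq r ≤ 0 := by rw [← hdz, zero_mul] at hr2; exact hr2
        exact normSq_eq_zero.mp (le_antisymm h7 (normSq_nonneg r))
      have hcast : (1 - (normSq ω₂ : ℂ)) = ((normSq α₁ : ℝ) : ℂ) := by
        have h8 : (1:ℝ) - normSq ω₂ = normSq α₁ := by rw [hb] at hba; linarith
        push_cast [← h8]; ring
      have hE0 : E = 0 := by
        rw [hE, hcast, ← Complex.mul_conj α₁]
        have h9 : (starRingEnd ℂ) α₁ * β + (starRingEnd ℂ) ω₂ * α₂ = 0 := by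
          have h10 := hr0; rw [hr] at h10; exact neg_eq_zero.mp h10
        calc β*(α₁*(starRingEnd ℂ) α₁) + α₁*α₂*(starRingEnd ℂ) ω₂
            = α₁ * ((starRingEnd ℂ) α₁ * β + (starRingEnd ℂ) ω₂ * α₂) := by ring
          _ = 0 := by rw [h9, mul_zero]
      rw [hE0, normSq_zero]
      have hA0 : a*b - normSq α₁ = 0 := by rw [ha1, ← hba]; ring
      rw [hA0, zero_mul]
    · -- d > 0
      have Hin : ∀ x z : ℂ, 0 ≤ (a*d - normSq p)*normSq x + (e*d - normSq r)*normSq z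
          + 2*((q*(d:ℂ) - p*r)*(starRingEnd ℂ) x*z).re := by
        intro x z
        have hdne : ((d:ℝ):ℂ) ≠ 0 := Complex.ofReal_ne_zero.mpr hdpos.ne'
        set y₀ := -(((starRingEnd ℂ) p * x + r*z)/((d:ℝ):ℂ)) with hy
        have hs : ((d:ℝ):ℂ)*y₀ + (starRingEnd ℂ) p*x + r*z = 0 := by
          rw [hy]; field_simp; ring
        have h1 := hF x y₀ z
        have h2 := schur a d e p q r x y₀ z
        rw [hs, normSq_zero] at h2
        have h3 : 0 ≤ d * (a*normSq x + d*normSq y₀ + e*normSq z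
            + 2*(p*(starRingEnd ℂ) x*y₀).re + 2*(q*(starRingEnd ℂ) x*z).re
            + 2*(r*(starRingEnd ℂ) y₀*z).re) := mul_nonneg hdpos.le h1
        rw [h2] at h3; linarith [h3]
      obtain ⟨hA0', hE0', hkey⟩ := two_nec Hin
      have hAeq : a*d - normSq p = a*b - normSq α₁ := by rw [hnp, hω₁a, hd]; ring
      have idu : q*((d:ℝ):ℂ) - p*r = -((starRingEnd ℂ) ω₁) * E := by
        rw [hq, hp, hr, hE, hd, hb]
        simp only [Complex.ext_iff, Complex.normSq_apply, Complex.mul_re, Complex.mul_im,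
          Complex.add_re, Complex.add_im, Complex.conj_re, Complex.conj_im, Complex.neg_re,
          Complex.neg_im, Complex.ofReal_re, Complex.ofReal_im, Complex.sub_re, Complex.sub_im,
          Complex.one_re, Complex.one_im]
        constructor <;> ring
      have hnu : normSq (q*((d:ℝ):ℂ) - p*r) = normSq ω₁ * normSq E := by
        rw [idu]; simp [Complex.normSq_mul]
      have idE' : b * (e*d - normSq r) = d * (b*c - normSq α₂) - normSq E := by
        rw [he, hd, hr, hE, hb, hc]
        simp only [Complex.normSq_apply, Complex.mul_re, Complex.mul_im, Complex.add_re,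
          Complex.add_im, Complex.conj_re, Complex.conj_im, Complex.neg_re, Complex.neg_im,
          Complex.ofReal_re, Complex.ofReal_im, Complex.sub_re, Complex.sub_im,
          Complex.one_re, Complex.one_im]
        ring
      rw [hnu, hω₁a, hAeq] at hkey
      rw [hAeq] at hA0'
      have h6 : b*(1-a) + (a*b - normSq α₁) = d := by rw [hd]; ring
      have h7 : b*((1-a)*normSq E) ≤ (a*b - normSq α₁)*(b*(e*d - normSq r)) := by
        nlinarith [mul_le_mul_of_nonneg_left hkey hb0]
      rw [idE'] at h7
      have h8 : d * normSq E ≤ d * ((a*b - normSq α₁)*(b*c - normSq α₂)) := by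
        nlinarith [h7, h6, normSq_nonneg E]
      exact le_of_mul_le_mul_left h8 hdpos

set_option maxHeartbeats 2000000 in
private lemma suf₂ (ω₁ ω₂ ω₃ α₁ α₂ β : ℂ)
    (hω₁ : normSq ω₁ ≤ 1) (hω₃ : normSq ω₃ ≤ 1)
    (h1 : normSq ω₂ = 1) (h2 : α₁ = 0) (h3 : α₂ = 0)
    (h4 : normSq β ≤ (1 - normSq ω₁) * (1 - normSq ω₃)) :
    ∀ x y z : ℂ, normSq (ω₁*x+α₁*y+β*z) + normSq (ω₂*y+α₂*z) + normSq (ω₃*z)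
      ≤ normSq x + normSq y + normSq z := by
  subst h2 h3
  intro x y z
  have hid : (normSq x + normSq y + normSq z)
      - (normSq (ω₁*x+0*y+β*z) + normSq (ω₂*y+0*z) + normSq (ω₃*z))
      = (1 - normSq ω₁)*normSq x + (1 - normSq ω₂)*normSq y
        + ((1 - normSq ω₃) - normSq β)*normSq z
        + 2*((-((starRingEnd ℂ) ω₁ * β))*(starRingEnd ℂ) x*z).re := by
    simp only [Complex.normSq_apply, Complex.mul_re, Complex.mul_im, Complex.add_re,
      Complex.add_im, Complex.conj_re, Complex.conj_im, Complex.neg_re, Complex.neg_im,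
      Complex.zero_re, Complex.zero_im]
    ring
  have hb0 : (1 - normSq ω₂)*normSq y = 0 := by rw [h1]; ring
  have hu : normSq (-((starRingEnd ℂ) ω₁ * β)) = normSq ω₁ * normSq β := by
    simp [Complex.normSq_mul]
  have hkey := two_suf (A := 1 - normSq ω₁) (C := (1 - normSq ω₃) - normSq β)
    (u := -((starRingEnd ℂ) ω₁ * β))
    (by linarith)
    (by nlinarith [normSq_nonneg ω₁, normSq_nonneg ω₃, normSq_nonneg β])
    (by rw [hu]; nlinarith [normSq_nonneg β, normSq_nonneg ω₁]) x z
  linarith [hid, hkey, hb0]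

set_option maxHeartbeats 4000000 in
private lemma suf₁ (ω₁ ω₂ ω₃ α₁ α₂ β : ℂ)
    (hω₁ : normSq ω₁ ≤ 1) (hω₃ : normSq ω₃ ≤ 1)
    (hblt : normSq ω₂ < 1)
    (h1 : normSq α₁ ≤ (1 - normSq ω₁) * (1 - normSq ω₂))
    (h2 : normSq α₂ ≤ (1 - normSq ω₂) * (1 - normSq ω₃))
    (h3 : normSq (β * (1 - (normSq ω₂ : ℂ)) + α₁ * α₂ * (starRingEnd ℂ) ω₂) ≤
        ((1 - normSq ω₁) * (1 - normSq ω₂) - normSq α₁) *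
        ((1 - normSq ω₂) * (1 - normSq ω₃) - normSq α₂)) :
    ∀ x y z : ℂ, normSq (ω₁*x+α₁*y+β*z) + normSq (ω₂*y+α₂*z) + normSq (ω₃*z)
      ≤ normSq x + normSq y + normSq z := by
  set a := 1 - normSq ω₁ with ha
  set b := 1 - normSq ω₂ with hb
  set c := 1 - normSq ω₃ with hc
  set p := -((starRingEnd ℂ) ω₁ * α₁) with hp
  set q := -((starRingEnd ℂ) ω₁ * β) with hq
  set r := -((starRingEnd ℂ) α₁ * β + (starRingEnd ℂ) ω₂ * α₂) with hr
  set E := β * (1 - (normSq ω₂ : ℂ)) + α₁ * α₂ * (starRingEnd ℂ) ω₂ with hE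
  set d := b - normSq α₁ with hd
  set e := c - normSq β - normSq α₂ with he
  clear_value a b c p q r E d e
  have hb0 : 0 < b := by rw [hb]; linarith
  have ha0 : 0 ≤ a := by rw [ha]; linarith
  have hc0 : 0 ≤ c := by rw [hc]; linarith
  have ha1 : a ≤ 1 := by rw [ha]; nlinarith [normSq_nonneg ω₁]
  have hA0 : 0 ≤ a*b - normSq α₁ := by linarith
  have hB0 : 0 ≤ b*c - normSq α₂ := by linarith
  have hd0 : 0 ≤ d := by rw [hd]; nlinarith [h1]
  have hω₁a : normSq ω₁ = 1 - a := by rw [ha]; ring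
  have hω₂b : normSq ω₂ = 1 - b := by rw [hb]; ring
  have hnp : normSq p = normSq ω₁ * normSq α₁ := by rw [hp]; simp [Complex.normSq_mul]
  intro x y z
  have hid : (normSq x + normSq y + normSq z)
      - (normSq (ω₁*x+α₁*y+β*z) + normSq (ω₂*y+α₂*z) + normSq (ω₃*z))
      = a*normSq x + d*normSq y + e*normSq z + 2*(p*(starRingEnd ℂ) x*y).re
        + 2*(q*(starRingEnd ℂ) x*z).re + 2*(r*(starRingEnd ℂ) y*z).re := by
    rw [hd, he, hp, hq, hr, ha, hb, hc]
    simp only [Complex.normSq_apply, Complex.mul_re, Complex.mul_im, Complex.add_re,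
      Complex.add_im, Complex.conj_re, Complex.conj_im, Complex.neg_re, Complex.neg_im]
    ring
  rw [← sub_nonneg, hid]
  rcases eq_or_lt_of_le hd0 with hdz | hdpos
  · -- d = 0
    have hba : b = normSq α₁ := by rw [hd] at hdz; linarith
    have ha1' : a = 1 := by nlinarith [h1, hb0]
    have hω₁0 : ω₁ = 0 := by
      have h5 : normSq ω₁ = 0 := by rw [hω₁a, ha1']; ring
      exact normSq_eq_zero.mp h5
    have hE0 : E = 0 := by
      have hA0' : a*b - normSq α₁ = 0 := by rw [ha1', ← hba]; ring
      have h5 : normSq E ≤ 0 := by rw [hA0', zero_mul] at h3; exact h3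
      exact normSq_eq_zero.mp (le_antisymm h5 (normSq_nonneg E))
    have hcast : (1 - (normSq ω₂ : ℂ)) = ((normSq α₁ : ℝ) : ℂ) := by
      have h8 : (1:ℝ) - normSq ω₂ = normSq α₁ := by rw [hb] at hba; linarith
      push_cast [← h8]; ring
    have hr0 : r = 0 := by
      have h9 : ((b:ℝ):ℂ) * r = -((starRingEnd ℂ) α₁ * E) := by
        have hbcast : ((b:ℝ):ℂ) = ((normSq α₁ : ℝ) : ℂ) := by exact_mod_cast hba
        rw [hr, hE, hcast, hbcast, ← Complex.mul_conj α₁]; ring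
      rw [hE0, mul_zero, neg_zero] at h9
      have hbne : ((b:ℝ):ℂ) ≠ 0 := Complex.ofReal_ne_zero.mpr hb0.ne'
      exact (mul_eq_zero.mp h9).resolve_left hbne
    have hp0 : p = 0 := by rw [hp, hω₁0]; simp
    have hq0 : q = 0 := by rw [hq, hω₁0]; simp
    have he0 : 0 ≤ e := by
      have h10 : β * (1 - (normSq ω₂:ℂ)) = -(α₁*α₂*(starRingEnd ℂ) ω₂) := by
        have h10' := hE0; rw [hE] at h10'; linear_combination h10'
      have h11 := congrArg normSq h10
      rw [hcast] at h11
      simp only [Complex.normSq_mul, Complex.normSq_neg, Complex.normSq_conj,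
        Complex.normSq_ofReal] at h11
      rw [← hba, hω₂b] at h11
      rw [he]
      nlinarith [h11, mul_pos hb0 hb0, mul_nonneg hb0.le (sub_nonneg.2 h2), hb0, h2]
    have hcr : ∀ w v : ℂ, ((0:ℂ)*(starRingEnd ℂ) w*v).re = 0 := by intro w v; simp
    rw [hp0, hq0, hr0, ← hdz]
    simp only [hcr, Complex.zero_re, mul_zero, zero_mul, add_zero]
    have hx' := mul_nonneg ha0 (normSq_nonneg x)
    have hz' := mul_nonneg he0 (normSq_nonneg z)
    linarith
  · -- d > 0
    have hAeq : a*d - normSq p = a*b - normSq α₁ := by rw [hnp, hω₁a, hd]; ring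
    have idE' : b * (e*d - normSq r) = d * (b*c - normSq α₂) - normSq E := by
      rw [he, hd, hr, hE, hb, hc]
      simp only [Complex.normSq_apply, Complex.mul_re, Complex.mul_im, Complex.add_re,
        Complex.add_im, Complex.conj_re, Complex.conj_im, Complex.neg_re, Complex.neg_im,
        Complex.ofReal_re, Complex.ofReal_im, Complex.sub_re, Complex.sub_im,
        Complex.one_re, Complex.one_im]
      ring
    have idu : q*((d:ℝ):ℂ) - p*r = -((starRingEnd ℂ) ω₁) * E := by
      rw [hq, hp, hr, hE, hd, hb]
      simp only [Complex.ext_iff, Complex.normSq_apply, Complex.mul_re, Complex.mul_im,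
        Complex.add_re, Complex.add_im, Complex.conj_re, Complex.conj_im, Complex.neg_re,
        Complex.neg_im, Complex.ofReal_re, Complex.ofReal_im, Complex.sub_re, Complex.sub_im,
        Complex.one_re, Complex.one_im]
      constructor <;> ring
    have hnu : normSq (q*((d:ℝ):ℂ) - p*r) = (1-a) * normSq E := by
      have h5 : normSq (-(starRingEnd ℂ) ω₁ * E) = normSq ω₁ * normSq E := by
        simp [Complex.normSq_mul]
      rw [idu, h5, hω₁a]
    have hdA : a*b - normSq α₁ ≤ d := by
      rw [hd]; nlinarith [mul_nonneg hb0.le (sub_nonneg.2 ha1)]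
    have hE''0 : 0 ≤ e*d - normSq r := by
      have h5 : 0 ≤ b*(e*d - normSq r) := by
        nlinarith [idE', h3, mul_nonneg (sub_nonneg.2 hdA) hB0]
      nlinarith [h5, hb0]
    have hu2 : normSq (q*((d:ℝ):ℂ) - p*r) ≤ (a*d - normSq p)*(e*d - normSq r) := by
      rw [hnu, hAeq]
      have h6 : b*(1-a) + (a*b - normSq α₁) = d := by rw [hd]; ring
      have h7 : d * normSq E ≤ d * ((a*b - normSq α₁)*(b*c - normSq α₂)) :=
        mul_le_mul_of_nonneg_left h3 hdpos.le
      nlinarith [h7, idE', h6, normSq_nonneg E, hA0, hb0]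
    have hins := two_suf (by rw [hAeq]; exact hA0) hE''0 hu2 x z
    have hsch := schur a d e p q r x y z
    have h8 : 0 ≤ d * (a*normSq x + d*normSq y + e*normSq z
        + 2*(p*(starRingEnd ℂ) x*y).re + 2*(q*(starRingEnd ℂ) x*z).re
        + 2*(r*(starRingEnd ℂ) y*z).re) := by
      rw [hsch]
      linarith [normSq_nonneg (((d:ℝ):ℂ)*y + (starRingEnd ℂ) p*x + r*z), hins]
    nlinarith [h8, hdpos]

set_option maxHeartbeats 1000000 in
private lemma norm_le_one_iff_quad (ω₁ ω₂ ω₃ α₁ α₂ β : ℂ) :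
    ‖Matrix.toEuclideanCLM (𝕜 := ℂ) !![ω₁, α₁, β; 0, ω₂, α₂; 0, 0, ω₃]‖ ≤ 1 ↔
    ∀ x y z : ℂ, normSq (ω₁*x+α₁*y+β*z) + normSq (ω₂*y+α₂*z) + normSq (ω₃*z)
      ≤ normSq x + normSq y + normSq z := by
  set T := Matrix.toEuclideanCLM (𝕜 := ℂ) !![ω₁, α₁, β; 0, ω₂, α₂; 0, 0, ω₃] with hT
  have h1 : ‖T‖ ≤ 1 ↔ ∀ v : EuclideanSpace ℂ (Fin 3), ‖T v‖ ≤ ‖v‖ := by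
    constructor
    · intro h v
      calc ‖T v‖ ≤ ‖T‖ * ‖v‖ := T.le_opNorm v
        _ ≤ 1 * ‖v‖ := mul_le_mul_of_nonneg_right h (norm_nonneg v)
        _ = ‖v‖ := one_mul _
    · intro h
      exact T.opNorm_le_bound zero_le_one (fun v => by simpa using h v)
  rw [h1]
  have key : ∀ x y z : ℂ, (‖T ((WithLp.equiv 2 (Fin 3 → ℂ)).symm ![x, y, z])‖
      ≤ ‖(WithLp.equiv 2 (Fin 3 → ℂ)).symm ![x, y, z]‖) ↔
      (normSq (ω₁*x+α₁*y+β*z) + normSq (ω₂*y+α₂*z) + normSq (ω₃*z)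
      ≤ normSq x + normSq y + normSq z) := by
    intro x y z
    rw [hT, WithLp.equiv_symm_apply, Matrix.toEuclideanCLM_toLp]
    rw [EuclideanSpace.norm_eq, EuclideanSpace.norm_eq]
    simp only [Matrix.toLin'_apply, Matrix.mulVec,
      dotProduct, Fin.sum_univ_three, Matrix.cons_val', Matrix.cons_val_zero,
      Matrix.cons_val_one, Matrix.head_cons, Matrix.empty_val', Matrix.cons_val_fin_one,
      Matrix.head_fin_const, Matrix.cons_val_two, Matrix.tail_cons, Matrix.of_apply]
    norm_num
    rw [Real.sqrt_le_sqrt_iff (by positivity)]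
    simp only [mul_pow, Complex.sq_norm, Complex.normSq_mul]
  constructor
  · intro h x y z
    exact (key x y z).mp (h _)
  · intro h v
    have hv : v = (WithLp.equiv 2 (Fin 3 → ℂ)).symm ![v 0, v 1, v 2] := by
      ext i; fin_cases i <;> rfl
    rw [hv]
    exact (key (v 0) (v 1) (v 2)).mpr (h _ _ _)

/-- **Contractivity criterion for 3×3 upper-triangular matrices** acting on Euclidean `ℂ³`. -/
theorem contraction_criterion_three_by_three (ω₁ ω₂ ω₃ α₁ α₂ β : ℂ)
    (hω₁ : ‖ω₁‖ ≤ 1) (hω₂ : ‖ω₂‖ ≤ 1) (hω₃ : ‖ω₃‖ ≤ 1) :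
    ‖Matrix.toEuclideanCLM (𝕜 := ℂ) !![ω₁, α₁, β; 0, ω₂, α₂; 0, 0, ω₃]‖ ≤ 1 ↔
      ((‖ω₂‖ < 1 ∧
        ‖α₁‖ ^ 2 ≤ (1 - ‖ω₁‖ ^ 2) * (1 - ‖ω₂‖ ^ 2) ∧
        ‖α₂‖ ^ 2 ≤ (1 - ‖ω₂‖ ^ 2) * (1 - ‖ω₃‖ ^ 2) ∧
        ‖β * (1 - (‖ω₂‖ : ℂ) ^ 2) + α₁ * α₂ * (starRingEnd ℂ) ω₂‖ ^ 2 ≤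
          ((1 - ‖ω₁‖ ^ 2) * (1 - ‖ω₂‖ ^ 2) - ‖α₁‖ ^ 2) *
            ((1 - ‖ω₂‖ ^ 2) * (1 - ‖ω₃‖ ^ 2) - ‖α₂‖ ^ 2)) ∨
      (‖ω₂‖ = 1 ∧ α₁ = 0 ∧ α₂ = 0 ∧
        ‖β‖ ^ 2 ≤ (1 - ‖ω₁‖ ^ 2) * (1 - ‖ω₃‖ ^ 2))) := by
  have hn1 : normSq ω₁ ≤ 1 := by rw [← Complex.sq_norm]; nlinarith [norm_nonneg ω₁]
  have hn2 : normSq ω₂ ≤ 1 := by rw [← Complex.sq_norm]; nlinarith [norm_nonneg ω₂]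
  have hn3 : normSq ω₃ ≤ 1 := by rw [← Complex.sq_norm]; nlinarith [norm_nonneg ω₃]
  have hmain : (∀ x y z : ℂ, normSq (ω₁*x+α₁*y+β*z) + normSq (ω₂*y+α₂*z) + normSq (ω₃*z)
      ≤ normSq x + normSq y + normSq z) ↔
    ((normSq ω₂ < 1 ∧ normSq α₁ ≤ (1 - normSq ω₁) * (1 - normSq ω₂) ∧
      normSq α₂ ≤ (1 - normSq ω₂) * (1 - normSq ω₃) ∧
      normSq (β * (1 - (normSq ω₂ : ℂ)) + α₁ * α₂ * (starRingEnd ℂ) ω₂) ≤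
        ((1 - normSq ω₁) * (1 - normSq ω₂) - normSq α₁) *
        ((1 - normSq ω₂) * (1 - normSq ω₃) - normSq α₂)) ∨
     (normSq ω₂ = 1 ∧ α₁ = 0 ∧ α₂ = 0 ∧ normSq β ≤ (1 - normSq ω₁) * (1 - normSq ω₃))) := by
    constructor
    · exact nec ω₁ ω₂ ω₃ α₁ α₂ β hn1 hn2 hn3
    · rintro (⟨k1, k2, k3, k4⟩ | ⟨k1, k2, k3, k4⟩)
      · exact suf₁ ω₁ ω₂ ω₃ α₁ α₂ β hn1 hn3 k1 k2 k3 k4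
      · exact suf₂ ω₁ ω₂ ω₃ α₁ α₂ β hn1 hn3 k1 k2 k3 k4
  rw [norm_le_one_iff_quad, hmain]
  have e2 : ((‖ω₂‖ : ℂ))^2 = ((normSq ω₂ : ℝ) : ℂ) := by
    rw [← Complex.ofReal_pow, Complex.sq_norm]
  have e3 : ‖ω₂‖ < 1 ↔ normSq ω₂ < 1 := by
    rw [← Complex.sq_norm]
    constructor <;> intro h <;> nlinarith [norm_nonneg ω₂]
  have e4 : ‖ω₂‖ = 1 ↔ normSq ω₂ = 1 := by
    rw [← Complex.sq_norm]
    constructor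
    · intro h; rw [h]; norm_num
    · intro h
      have h5 : (‖ω₂‖ - 1) * (‖ω₂‖ + 1) = 0 := by nlinarith
      rcases mul_eq_zero.mp h5 with h6 | h6
      · linarith
      · linarith [norm_nonneg ω₂]
  rw [← e3, ← e4]
  simp only [← Complex.sq_norm, ← e2]
  norm_cast
end

section
/- (Beardon–Minda three-point Schwarz–Pick lemma.) Let f : ℂ → ℂ be holomorphic on the open unit disk 𝔻 with f(𝔻) ⊆ 𝔻, and let ω₁, ω₂, ω₃ ∈ 𝔻 be pairwise distinct. Then |f*(ω₁,ω₂) − f*(ω₃,ω₂)| · |1 − conj(ω₃)·ω₁| ≤ |ω₁ − ω₃| · |1 − conj(f*(ω₃,ω₂))·f*(ω₁,ω₂)|. -/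
open Complex Metric Set Filter Topology

/-- The hyperbolic divided difference
`f*(z,w) = ((f z - f w)/(1 - conj (f w) * f z)) * ((1 - conj w * z)/(z - w))`. -/
noncomputable def hypDivDiff (f : ℂ → ℂ) (z w : ℂ) : ℂ :=
  ((f z - f w) / (1 - (starRingEnd ℂ) (f w) * f z)) * ((1 - (starRingEnd ℂ) w * z) / (z - w))

/-- The Möbius transform of the disk sending `a` to `0`. -/
noncomputable def mobiusBM (a z : ℂ) : ℂ := (z - a) / (1 - (starRingEnd ℂ) a * z)

lemma unitDisk_eq_ball_BM : {z : ℂ | ‖z‖ < 1} = ball (0 : ℂ) 1 := by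
  ext z; simp [mem_ball_zero_iff]

lemma one_sub_conj_mul_ne_zero_BM {a z : ℂ} (ha : ‖a‖ < 1)
    (hz : ‖z‖ < 1) : 1 - (starRingEnd ℂ) a * z ≠ 0 := by
  intro h
  have h1 : (starRingEnd ℂ) a * z = 1 := by linear_combination -h
  have h2 : ‖(starRingEnd ℂ) a * z‖ < 1 := by
    rw [norm_mul, Complex.norm_conj]
    calc ‖a‖ * ‖z‖ ≤ 1 * ‖z‖ :=
          mul_le_mul_of_nonneg_right ha.le (norm_nonneg z)
      _ < 1 := by simpa using hz
  rw [h1] at h2; simp at h2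

lemma mobiusBM_mem {a z : ℂ} (ha : ‖a‖ < 1) (hz : ‖z‖ < 1) :
    ‖mobiusBM a z‖ < 1 := by
  have hd := one_sub_conj_mul_ne_zero_BM ha hz
  have hdpos : 0 < ‖1 - (starRingEnd ℂ) a * z‖ := norm_pos_iff.mpr hd
  rw [mobiusBM, norm_div, div_lt_one hdpos]
  have hna : Complex.normSq a < 1 := by
    rw [← Complex.sq_norm]; nlinarith [norm_nonneg a]
  have hnz : Complex.normSq z < 1 := by
    rw [← Complex.sq_norm]; nlinarith [norm_nonneg z]
  have key : Complex.normSq (z - a) < Complex.normSq (1 - (starRingEnd ℂ) a * z) := by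
    have e : Complex.normSq (1 - (starRingEnd ℂ) a * z) - Complex.normSq (z - a)
        = (1 - Complex.normSq a) * (1 - Complex.normSq z) := by
      simp only [Complex.normSq_apply, Complex.sub_re, Complex.sub_im, Complex.mul_re,
        Complex.mul_im, Complex.one_re, Complex.one_im, Complex.conj_re, Complex.conj_im]
      ring
    nlinarith
  rw [Complex.norm_def, Complex.norm_def]
  exact Real.sqrt_lt_sqrt (Complex.normSq_nonneg _) key

lemma mobiusBM_diffOn {a : ℂ} (ha : ‖a‖ < 1) :
    DifferentiableOn ℂ (mobiusBM a) {z : ℂ | ‖z‖ < 1} := by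
  apply DifferentiableOn.div
  · exact (differentiable_id.sub_const a).differentiableOn
  · exact ((differentiable_const (1 : ℂ)).sub
      ((differentiable_const _).mul differentiable_id)).differentiableOn
  · exact fun z hz => one_sub_conj_mul_ne_zero_BM ha hz

lemma mobiusBM_left_inv {a z : ℂ} (ha : ‖a‖ < 1) (hz : ‖z‖ < 1) :
    mobiusBM (-a) (mobiusBM a z) = z := by
  have h1 := one_sub_conj_mul_ne_zero_BM ha hz
  have h3 : (1 : ℂ) - (starRingEnd ℂ) (-a) * mobiusBM a z ≠ 0 :=
    one_sub_conj_mul_ne_zero_BM (by simpa using ha) (mobiusBM_mem ha hz)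
  have key : mobiusBM a z - (-a) = z * (1 - (starRingEnd ℂ) (-a) * mobiusBM a z) := by
    simp only [mobiusBM, map_neg]
    have e : (z - a) / (1 - (starRingEnd ℂ) a * z) * (1 - (starRingEnd ℂ) a * z) = z - a :=
      div_mul_cancel₀ _ h1
    linear_combination e
  show (mobiusBM a z - (-a)) / (1 - (starRingEnd ℂ) (-a) * mobiusBM a z) = z
  rw [key, mul_div_assoc, div_self h3, mul_one]

/-- The Schwarz–Pick lemma. -/
lemma schwarz_pick_BM {f : ℂ → ℂ}
    (hf : DifferentiableOn ℂ f {z : ℂ | ‖z‖ < 1})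
    (hmap : ∀ z : ℂ, ‖z‖ < 1 → ‖f z‖ < 1)
    {z w : ℂ} (hz : ‖z‖ < 1) (hw : ‖w‖ < 1) :
    ‖mobiusBM (f w) (f z)‖ ≤ ‖mobiusBM w z‖ := by
  have hw' : ‖-w‖ < 1 := by simpa using hw
  have hfw := hmap w hw
  have hmono : MapsTo (mobiusBM (-w)) {z : ℂ | ‖z‖ < 1} {z : ℂ | ‖z‖ < 1} :=
    fun x hx => mobiusBM_mem hw' hx
  have hfmaps : MapsTo f {z : ℂ | ‖z‖ < 1} {z : ℂ | ‖z‖ < 1} :=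
    fun x hx => hmap x hx
  have hd : DifferentiableOn ℂ (fun ζ => mobiusBM (f w) (f (mobiusBM (-w) ζ)))
      {z : ℂ | ‖z‖ < 1} :=
    (mobiusBM_diffOn hfw).comp (hf.comp (mobiusBM_diffOn hw') hmono) (hfmaps.comp hmono)
  have hmaps : MapsTo (fun ζ => mobiusBM (f w) (f (mobiusBM (-w) ζ)))
      {z : ℂ | ‖z‖ < 1} {z : ℂ | ‖z‖ < 1} :=
    fun x hx => mobiusBM_mem hfw (hmap _ (mobiusBM_mem hw' hx))
  have h0 : (fun ζ => mobiusBM (f w) (f (mobiusBM (-w) ζ))) 0 = 0 := by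
    have hmw : mobiusBM (-w) 0 = w := by simp [mobiusBM]
    simp [hmw, mobiusBM]
  rw [unitDisk_eq_ball_BM] at hd hmaps
  have hlt : ‖mobiusBM w z‖ < 1 := mobiusBM_mem hw hz
  have := Complex.norm_le_norm_of_mapsTo_ball hd (hmaps.mono_right ball_subset_closedBall) h0 hlt
  have hinv : mobiusBM (-w) (mobiusBM w z) = z := mobiusBM_left_inv hw hz
  simpa [hinv] using this

/-- Existence of the holomorphic extension of `z ↦ hypDivDiff f z ω₂`. -/
lemma exists_g_BM (f : ℂ → ℂ)
    (hf : DifferentiableOn ℂ f {z : ℂ | ‖z‖ < 1})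
    (hmap : ∀ z : ℂ, ‖z‖ < 1 → ‖f z‖ < 1)
    (ω₂ : ℂ) (h₂ : ‖ω₂‖ < 1) :
    ∃ g : ℂ → ℂ, DifferentiableOn ℂ g {z : ℂ | ‖z‖ < 1} ∧
      (∀ z : ℂ, ‖z‖ < 1 → ‖g z‖ ≤ 1) ∧
      (∀ z : ℂ, z ≠ ω₂ → g z = hypDivDiff f z ω₂) := by
  have hSopen : IsOpen {z : ℂ | ‖z‖ < 1} := by
    rw [unitDisk_eq_ball_BM]; exact isOpen_ball
  have h2S : ω₂ ∈ {z : ℂ | ‖z‖ < 1} := h₂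
  have hfw := hmap ω₂ h₂
  have hNdiff : DifferentiableOn ℂ (fun z => mobiusBM (f ω₂) (f z))
      {z : ℂ | ‖z‖ < 1} :=
    (mobiusBM_diffOn hfw).comp hf (fun x hx => hmap x hx)
  have hNω₂ : mobiusBM (f ω₂) (f ω₂) = 0 := by simp [mobiusBM]
  have hgdiff : DifferentiableOn ℂ
      (fun z => dslope (fun z => mobiusBM (f ω₂) (f z)) ω₂ z * (1 - (starRingEnd ℂ) ω₂ * z))
      {z : ℂ | ‖z‖ < 1} :=
    ((Complex.differentiableOn_dslope (hSopen.mem_nhds h2S)).mpr hNdiff).mul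
      (((differentiable_const (1 : ℂ)).sub
        ((differentiable_const _).mul differentiable_id)).differentiableOn)
  refine ⟨fun z => dslope (fun z => mobiusBM (f ω₂) (f z)) ω₂ z * (1 - (starRingEnd ℂ) ω₂ * z),
    hgdiff, ?_, ?_⟩
  · -- the bound
    have hbound : ∀ z : ℂ, ‖z‖ < 1 → z ≠ ω₂ →
        ‖dslope (fun z => mobiusBM (f ω₂) (f z)) ω₂ z
          * (1 - (starRingEnd ℂ) ω₂ * z)‖ ≤ 1 := by
      intro z hzS hne
      have hsp := schwarz_pick_BM hf hmap hzS h₂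
      have h1 : (0 : ℝ) < ‖z - ω₂‖ :=
        norm_pos_iff.mpr (sub_ne_zero.mpr hne)
      have h2' : (0 : ℝ) < ‖1 - (starRingEnd ℂ) ω₂ * z‖ :=
        norm_pos_iff.mpr (one_sub_conj_mul_ne_zero_BM h₂ hzS)
      have hval : ‖dslope (fun z => mobiusBM (f ω₂) (f z)) ω₂ z
          * (1 - (starRingEnd ℂ) ω₂ * z)‖
          = ‖mobiusBM (f ω₂) (f z)‖ * ‖1 - (starRingEnd ℂ) ω₂ * z‖
            / ‖z - ω₂‖ := by
        rw [dslope_of_ne _ hne, slope_def_field, hNω₂, sub_zero, norm_mul, norm_div]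
        ring
      rw [hval, div_le_one h1]
      have hm : ‖mobiusBM ω₂ z‖
          = ‖z - ω₂‖ / ‖1 - (starRingEnd ℂ) ω₂ * z‖ := by
        rw [mobiusBM, norm_div]
      rw [hm] at hsp
      calc ‖mobiusBM (f ω₂) (f z)‖ * ‖1 - (starRingEnd ℂ) ω₂ * z‖
          ≤ (‖z - ω₂‖ / ‖1 - (starRingEnd ℂ) ω₂ * z‖)
              * ‖1 - (starRingEnd ℂ) ω₂ * z‖ :=
            mul_le_mul_of_nonneg_right hsp (norm_nonneg _)
        _ = ‖z - ω₂‖ := div_mul_cancel₀ _ h2'.ne'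
    intro z hzS
    by_cases hne : z = ω₂
    · have hc : ContinuousAt
          (fun y => dslope (fun y => mobiusBM (f ω₂) (f y)) ω₂ y * (1 - (starRingEnd ℂ) ω₂ * y))
          ω₂ := (hgdiff.differentiableAt (hSopen.mem_nhds h2S)).continuousAt
      have ht : Tendsto
          (fun x => ‖dslope (fun y => mobiusBM (f ω₂) (f y)) ω₂ x
            * (1 - (starRingEnd ℂ) ω₂ * x)‖)
          (𝓝[≠] ω₂)
          (𝓝 (‖dslope (fun y => mobiusBM (f ω₂) (f y)) ω₂ ω₂
            * (1 - (starRingEnd ℂ) ω₂ * ω₂)‖)) :=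
        (continuous_norm.continuousAt.comp hc).continuousWithinAt.tendsto
      have hle : ‖dslope (fun y => mobiusBM (f ω₂) (f y)) ω₂ ω₂
          * (1 - (starRingEnd ℂ) ω₂ * ω₂)‖ ≤ 1 := by
        refine le_of_tendsto ht ?_
        filter_upwards [nhdsWithin_le_nhds (hSopen.mem_nhds h2S), self_mem_nhdsWithin]
          with x hxS hxne
        exact hbound x hxS hxne
      show ‖dslope (fun y => mobiusBM (f ω₂) (f y)) ω₂ z
          * (1 - (starRingEnd ℂ) ω₂ * z)‖ ≤ 1
      rw [hne]
      exact hle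
    · exact hbound z hzS hne
  · intro z hne
    show dslope (fun z => mobiusBM (f ω₂) (f z)) ω₂ z * (1 - (starRingEnd ℂ) ω₂ * z)
      = hypDivDiff f z ω₂
    rw [dslope_of_ne _ hne, slope_def_field, hNω₂, sub_zero]
    simp only [mobiusBM, hypDivDiff]
    ring

/-- **The Beardon–Minda three-point Schwarz–Pick lemma.** -/
theorem beardon_minda (f : ℂ → ℂ)
    (hf : DifferentiableOn ℂ f {z : ℂ | ‖z‖ < 1})
    (hmap : ∀ z : ℂ, ‖z‖ < 1 → ‖f z‖ < 1)
    (ω₁ ω₂ ω₃ : ℂ)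
    (h₁ : ‖ω₁‖ < 1) (h₂ : ‖ω₂‖ < 1) (h₃ : ‖ω₃‖ < 1)
    (h₁₂ : ω₁ ≠ ω₂) (h₁₃ : ω₁ ≠ ω₃) (h₂₃ : ω₂ ≠ ω₃) :
    ‖hypDivDiff f ω₁ ω₂ - hypDivDiff f ω₃ ω₂‖ *
        ‖1 - (starRingEnd ℂ) ω₃ * ω₁‖ ≤
      ‖ω₁ - ω₃‖ *
        ‖1 - (starRingEnd ℂ) (hypDivDiff f ω₃ ω₂) * hypDivDiff f ω₁ ω₂‖ := by
  obtain ⟨g, hgdiff, hgle, hgeq⟩ := exists_g_BM f hf hmap ω₂ h₂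
  have hSopen : IsOpen {z : ℂ | ‖z‖ < 1} := by
    rw [unitDisk_eq_ball_BM]; exact isOpen_ball
  have hSconn : IsPreconnected {z : ℂ | ‖z‖ < 1} := by
    rw [unitDisk_eq_ball_BM]; exact (convex_ball _ _).isPreconnected
  have hg₁ : g ω₁ = hypDivDiff f ω₁ ω₂ := hgeq ω₁ h₁₂
  have hg₃ : g ω₃ = hypDivDiff f ω₃ ω₂ := hgeq ω₃ (Ne.symm h₂₃)
  by_cases hcase : ∀ z : ℂ, ‖z‖ < 1 → ‖g z‖ < 1
  · -- apply Schwarz–Pick to `g`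
    have hsp := schwarz_pick_BM hgdiff hcase h₁ h₃
    have hA : ‖g ω₁‖ < 1 := hcase ω₁ h₁
    have hB : ‖g ω₃‖ < 1 := hcase ω₃ h₃
    have hd1 : (0 : ℝ) < ‖1 - (starRingEnd ℂ) (g ω₃) * g ω₁‖ :=
      norm_pos_iff.mpr (one_sub_conj_mul_ne_zero_BM hB hA)
    have hd2 : (0 : ℝ) < ‖1 - (starRingEnd ℂ) ω₃ * ω₁‖ :=
      norm_pos_iff.mpr (one_sub_conj_mul_ne_zero_BM h₃ h₁)
    rw [mobiusBM, mobiusBM, norm_div, norm_div, div_le_div_iff₀ hd1 hd2] at hsp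
    rw [← hg₁, ← hg₃]
    exact hsp
  · -- max modulus: `g` is constant
    push_neg at hcase
    obtain ⟨z₀, hz₀, hz₀ge⟩ := hcase
    have hz₀eq : ‖g z₀‖ = 1 := le_antisymm (hgle z₀ hz₀) hz₀ge
    have hmax : IsMaxOn (norm ∘ g) {z : ℂ | ‖z‖ < 1} z₀ := by
      intro x hx
      simp only [Function.comp_apply, hz₀eq]
      exact hgle x hx
    have hconst := Complex.eqOn_of_isPreconnected_of_isMaxOn_norm hSconn hSopen hgdiff hz₀ hmax
    have he : hypDivDiff f ω₁ ω₂ - hypDivDiff f ω₃ ω₂ = 0 := by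
      rw [← hg₁, ← hg₃, hconst h₁, hconst h₃]
      simp [Function.const]
    rw [he]
    simp only [norm_zero, zero_mul]
    positivity
end

section
/- (Goluzin–Yamashita second-order Schwarz–Pick inequality.) Let f : ℂ → ℂ be holomorphic on the open unit disk 𝔻 with f(𝔻) ⊆ 𝔻, and let ω ∈ 𝔻. Set α = 1 − |ω|² and β = −conj(ω)·(1 − |ω|²). Then |((1/2)·α²·f''(ω) + β·f'(ω))·(1 − |f(ω)|²) + α²·f'(ω)²·conj(f(ω))| ≤ (1 − |f(ω)|²)² − |α·f'(ω)|², where f' and f'' denote the first and second complex derivatives of f. -/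
section GoluzinYamashita
open Metric Set Complex

lemma aux_ne (a z : ℂ) (ha : ‖a‖ < 1) (hz : ‖z‖ < 1) :
    1 + (starRingEnd ℂ) a * z ≠ 0 := by
  intro h
  have h1 : ‖(starRingEnd ℂ) a * z‖ < 1 := by
    rw [norm_mul, Complex.norm_conj]
    nlinarith [norm_nonneg a, norm_nonneg z]
  have h2 : (starRingEnd ℂ) a * z = -1 := by linear_combination h
  rw [h2] at h1
  simp at h1

lemma aux_normSq (a z : ℂ) :
    Complex.normSq (1 + (starRingEnd ℂ) a * z) - Complex.normSq (z + a) =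
      (1 - Complex.normSq a) * (1 - Complex.normSq z) := by
  have e : ∀ w : ℂ, (Complex.normSq w : ℂ) = w * (starRingEnd ℂ) w := fun w =>
    (Complex.mul_conj w).symm
  apply Complex.ofReal_injective
  push_cast
  rw [e, e, e, e]
  simp only [map_add, map_mul, map_one, Complex.conj_conj]
  ring

lemma aux_maps (a z : ℂ) (ha : ‖a‖ < 1) (hz : ‖z‖ < 1) :
    ‖(z + a) / (1 + (starRingEnd ℂ) a * z)‖ < 1 := by
  have hne := aux_ne a z ha hz
  have hpos : 0 < ‖1 + (starRingEnd ℂ) a * z‖ := norm_pos_iff.mpr hne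
  rw [norm_div, div_lt_one hpos]
  have ha' : Complex.normSq a < 1 := by rw [← Complex.sq_norm]; nlinarith [norm_nonneg a]
  have hz' : Complex.normSq z < 1 := by rw [← Complex.sq_norm]; nlinarith [norm_nonneg z]
  have h2 : Complex.normSq (z + a) < Complex.normSq (1 + (starRingEnd ℂ) a * z) := by
    have := aux_normSq a z
    nlinarith
  have := Real.sqrt_lt_sqrt (Complex.normSq_nonneg _) h2
  rwa [Complex.norm_def, Complex.norm_def]

lemma hasDerivAt_T (a z : ℂ) (h : 1 + (starRingEnd ℂ) a * z ≠ 0) :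
    HasDerivAt (fun w => (w + a) / (1 + (starRingEnd ℂ) a * w))
      ((1 - (starRingEnd ℂ) a * a) / (1 + (starRingEnd ℂ) a * z) ^ 2) z := by
  have h1 : HasDerivAt (fun w : ℂ => w + a) 1 z := (hasDerivAt_id z).add_const a
  have h2 : HasDerivAt (fun w : ℂ => 1 + (starRingEnd ℂ) a * w) ((starRingEnd ℂ) a) z := by
    simpa using ((hasDerivAt_id z).const_mul ((starRingEnd ℂ) a)).const_add 1
  have h3 : HasDerivAt (fun w => (w + a) / (1 + (starRingEnd ℂ) a * w)) _ z := h1.div h2 h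
  convert h3 using 1
  ring

lemma abs_one_sub_conj_mul_self (b : ℂ) :
    (1 : ℂ) - (starRingEnd ℂ) b * b = ((1 - ‖b‖ ^ 2 : ℝ) : ℂ) := by
  have : (starRingEnd ℂ) b * b = ((‖b‖ ^ 2 : ℝ) : ℂ) := by
    rw [mul_comm, Complex.mul_conj, Complex.sq_norm]
  rw [this]
  push_cast
  ring

lemma schwarz_pick_zero (h : ℂ → ℂ) (hd : DifferentiableOn ℂ h (ball 0 1))
    (hb : ∀ z ∈ ball (0 : ℂ) 1, ‖h z‖ ≤ 1) :
    ‖deriv h 0‖ ≤ 1 - ‖h 0‖ ^ 2 := by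
  have h0mem : (0 : ℂ) ∈ ball (0 : ℂ) 1 := by simp
  by_cases hc : ∃ z ∈ ball (0 : ℂ) 1, ‖h z‖ = 1
  · obtain ⟨z₀, hz₀, hz1⟩ := hc
    have hmax : IsMaxOn (norm ∘ h) (ball 0 1) z₀ := by
      intro z hz
      simp only [Function.comp_apply, hz1]
      exact hb z hz
    have heq := Complex.eqOn_of_isPreconnected_of_isMaxOn_norm
      (convex_ball (0 : ℂ) 1).isPreconnected isOpen_ball hd hz₀ hmax
    have hconst : deriv h 0 = 0 := by
      have he : h =ᶠ[nhds (0 : ℂ)] fun _ => h z₀ := by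
        filter_upwards [isOpen_ball.mem_nhds h0mem] with z hz using heq hz
      rw [he.deriv_eq]
      simp
    have h01 : ‖h 0‖ = 1 := by rw [heq h0mem]; exact hz1
    rw [hconst, h01]
    simp
  · push_neg at hc
    have hlt : ∀ z ∈ ball (0 : ℂ) 1, ‖h z‖ < 1 := fun z hz =>
      lt_of_le_of_ne (hb z hz) (hc z hz)
    set b := h 0 with hbdef
    have hb1 : ‖b‖ < 1 := hlt 0 h0mem
    have hbneg : ‖-b‖ < 1 := by rwa [norm_neg]
    set k : ℂ → ℂ := fun z => (h z + -b) / (1 + (starRingEnd ℂ) (-b) * h z) with hkdef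
    have hkd : ∀ z ∈ ball (0 : ℂ) 1,
        HasDerivAt k ((1 - (starRingEnd ℂ) (-b) * (-b)) / (1 + (starRingEnd ℂ) (-b) * h z) ^ 2
          * deriv h z) z := by
      intro z hz
      have hdz : HasDerivAt h (deriv h z) z :=
        ((hd z hz).differentiableAt (isOpen_ball.mem_nhds hz)).hasDerivAt
      exact (hasDerivAt_T (-b) (h z) (aux_ne (-b) (h z) hbneg (hlt z hz))).comp z hdz
    have hk_maps : MapsTo k (ball 0 1) (ball 0 1) := by
      intro z hz
      have := aux_maps (-b) (h z) hbneg (hlt z hz)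
      simpa [hkdef, Complex.dist_eq] using this
    have hk0 : k 0 = 0 := by simp [hkdef, ← hbdef]
    have hkdiff : DifferentiableOn ℂ k (ball 0 1) := fun z hz =>
      ((hkd z hz).differentiableAt).differentiableWithinAt
    have habs : ‖deriv k 0‖ ≤ 1 / 1 := by
      apply Complex.norm_deriv_le_div_of_mapsTo_ball hkdiff _ one_pos
      rw [hk0]
      exact hk_maps.mono_right ball_subset_closedBall
    have hβ : (1 : ℂ) - (starRingEnd ℂ) b * b ≠ 0 := by
      rw [abs_one_sub_conj_mul_self]
      simp only [ne_eq, Complex.ofReal_eq_zero]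
      nlinarith [norm_nonneg b]
    have hkderiv : deriv k 0 = deriv h 0 / (1 - (starRingEnd ℂ) b * b) := by
      rw [(hkd 0 h0mem).deriv, ← hbdef]
      have e1 : (1 : ℂ) - (starRingEnd ℂ) (-b) * (-b) = 1 - (starRingEnd ℂ) b * b := by
        rw [map_neg]; ring
      have e2 : (1 : ℂ) + (starRingEnd ℂ) (-b) * b = 1 - (starRingEnd ℂ) b * b := by
        rw [map_neg]; ring
      rw [e1, e2, pow_two]
      rw [div_mul_eq_div_div_swap, div_self hβ, one_div, div_eq_mul_inv, mul_comm]
    have habs2 : ‖deriv h 0‖ / (1 - ‖b‖ ^ 2) ≤ 1 := by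
      have : ‖deriv k 0‖
          = ‖deriv h 0‖ / (1 - ‖b‖ ^ 2) := by
        rw [hkderiv, norm_div, abs_one_sub_conj_mul_self, Complex.norm_real, Real.norm_eq_abs,
          abs_of_pos (by nlinarith [norm_nonneg b])]
      rw [this] at habs
      linarith [habs]
    have hpos : (0 : ℝ) < 1 - ‖b‖ ^ 2 := by nlinarith [norm_nonneg b]
    calc ‖deriv h 0‖
        = ‖deriv h 0‖ / (1 - ‖b‖ ^ 2) * (1 - ‖b‖ ^ 2) := by
          field_simp
      _ ≤ 1 * (1 - ‖b‖ ^ 2) := by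
          apply mul_le_mul_of_nonneg_right habs2 hpos.le
      _ = 1 - ‖b‖ ^ 2 := one_mul _

lemma coeff_two_bound (g : ℂ → ℂ) (hd : DifferentiableOn ℂ g (ball 0 1))
    (hm : MapsTo g (ball 0 1) (ball 0 1)) (h0 : g 0 = 0) :
    ‖deriv (deriv g) 0‖ ≤ 2 * (1 - ‖deriv g 0‖ ^ 2) := by
  have h0mem : (0 : ℂ) ∈ ball (0 : ℂ) 1 := by simp
  set h : ℂ → ℂ := dslope g 0 with hhdef
  have hbd : ∀ z ∈ ball (0 : ℂ) 1, ‖h z‖ ≤ 1 := by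
    intro z hz
    have hm' : MapsTo g (ball 0 1) (ball (g 0) 1) := by rwa [h0]
    have := Complex.norm_dslope_le_div_of_mapsTo_ball hd (hm'.mono_right ball_subset_closedBall) hz
    simpa using this
  have hanal : AnalyticAt ℂ h 0 := by
    obtain ⟨p, hp⟩ := hd.analyticOnNhd isOpen_ball 0 h0mem
    exact hp.has_fpower_series_dslope_fslope.analyticAt
  have hdiff : ∀ z ∈ ball (0 : ℂ) 1, DifferentiableAt ℂ h z := by
    intro z hz
    rcases eq_or_ne z 0 with rfl | hne
    · exact hanal.differentiableAt
    · exact (differentiableAt_dslope_of_ne hne).2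
        ((hd z hz).differentiableAt (isOpen_ball.mem_nhds hz))
  have hdOn : DifferentiableOn ℂ h (ball 0 1) := fun z hz =>
    (hdiff z hz).differentiableWithinAt
  have hgz : ∀ z : ℂ, g z = z * h z := by
    intro z
    have := sub_smul_dslope g 0 z
    simp only [sub_zero, smul_eq_mul, h0] at this
    rw [← this, hhdef]
  have hderiv_g : ∀ z ∈ ball (0 : ℂ) 1, deriv g z = h z + z * deriv h z := by
    intro z hz
    have h1 : HasDerivAt (fun w => w * h w) (1 * h z + z * deriv h z) z :=
      (hasDerivAt_id z).mul ((hdiff z hz).hasDerivAt)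
    have h2 : HasDerivAt g (1 * h z + z * deriv h z) z := by
      apply h1.congr_of_eventuallyEq
      filter_upwards with w using hgz w
    rw [h2.deriv]
    ring
  have hd2 : DifferentiableAt ℂ (deriv h) 0 :=
    ((hdOn.analyticOnNhd isOpen_ball).deriv 0 h0mem).differentiableAt
  have key : deriv (deriv g) 0 = 2 * deriv h 0 := by
    have h1 : HasDerivAt (fun z => h z + z * deriv h z)
        (deriv h 0 + (1 * deriv h 0 + 0 * deriv (deriv h) 0)) 0 :=
      ((hdiff 0 h0mem).hasDerivAt).add ((hasDerivAt_id 0).mul hd2.hasDerivAt)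
    have h2 : deriv g =ᶠ[nhds (0 : ℂ)] fun z => h z + z * deriv h z := by
      filter_upwards [isOpen_ball.mem_nhds h0mem] with z hz using hderiv_g z hz
    rw [h2.deriv_eq, h1.deriv]
    ring
  have hsp := schwarz_pick_zero h hdOn hbd
  rw [hhdef, dslope_same] at hsp
  rw [key, norm_mul]
  have : ‖(2 : ℂ)‖ = 2 := by simp
  rw [this]
  have hh0 : ‖h 0‖ = ‖deriv g 0‖ := by rw [hhdef, dslope_same]
  nlinarith [norm_nonneg (deriv h 0)]


/-- **The Goluzin–Yamashita second-order Schwarz–Pick inequality.** -/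
theorem goluzin_yamashita (f : ℂ → ℂ)
    (hf : DifferentiableOn ℂ f {z : ℂ | ‖z‖ < 1})
    (hmap : ∀ z : ℂ, ‖z‖ < 1 → ‖f z‖ < 1)
    (ω : ℂ) (hω : ‖ω‖ < 1) :
    ‖(((1 / 2) * ((1 : ℂ) - (‖ω‖ : ℂ) ^ 2) ^ 2 * deriv (deriv f) ω +
            (-(starRingEnd ℂ) ω * ((1 : ℂ) - (‖ω‖ : ℂ) ^ 2)) * deriv f ω) *
            ((1 : ℂ) - (‖f ω‖ : ℂ) ^ 2) +
          ((1 : ℂ) - (‖ω‖ : ℂ) ^ 2) ^ 2 * (deriv f ω) ^ 2 * (starRingEnd ℂ) (f ω))‖ ≤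
      (1 - ‖f ω‖ ^ 2) ^ 2 -
        ‖((1 : ℂ) - (‖ω‖ : ℂ) ^ 2) * deriv f ω‖ ^ 2 := by
  have hset : {z : ℂ | ‖z‖ < 1} = ball (0 : ℂ) 1 := by
    ext z; simp [Complex.dist_eq]
  rw [hset] at hf
  have hmem : ∀ z : ℂ, z ∈ ball (0 : ℂ) 1 ↔ ‖z‖ < 1 := by
    intro z; simp [Complex.dist_eq]
  have h0mem : (0 : ℂ) ∈ ball (0 : ℂ) 1 := by simp
  have hωmem : ω ∈ ball (0 : ℂ) 1 := (hmem ω).2 hω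
  set b := f ω with hbdef
  have hb1 : ‖b‖ < 1 := hmap ω hω
  have hbneg : ‖-b‖ < 1 := by rwa [norm_neg]
  set u : ℂ → ℂ := fun z => (z + ω) / (1 + (starRingEnd ℂ) ω * z) with hudef
  set F : ℂ → ℂ := fun z => f (u z) with hFdef
  set g : ℂ → ℂ := fun z => (F z + -b) / (1 + (starRingEnd ℂ) (-b) * F z) with hgdef
  have hu_mem : ∀ z ∈ ball (0 : ℂ) 1, ‖u z‖ < 1 := fun z hz =>
    aux_maps ω z hω ((hmem z).1 hz)
  have hF_lt : ∀ z ∈ ball (0 : ℂ) 1, ‖F z‖ < 1 := fun z hz =>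
    hmap _ (hu_mem z hz)
  have hu0 : u 0 = ω := by simp [hudef]
  have hF0 : F 0 = b := by rw [hFdef]; simp only [hu0, hbdef]
  -- derivatives
  have hu_der : ∀ z ∈ ball (0 : ℂ) 1,
      HasDerivAt u ((1 - (starRingEnd ℂ) ω * ω) / (1 + (starRingEnd ℂ) ω * z) ^ 2) z :=
    fun z hz => hasDerivAt_T ω z (aux_ne ω z hω ((hmem z).1 hz))
  have hF_der : ∀ z ∈ ball (0 : ℂ) 1,
      HasDerivAt F (deriv f (u z) *
        ((1 - (starRingEnd ℂ) ω * ω) / (1 + (starRingEnd ℂ) ω * z) ^ 2)) z := by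
    intro z hz
    have hmem' : u z ∈ ball (0 : ℂ) 1 := (hmem _).2 (hu_mem z hz)
    have h2 : HasDerivAt f (deriv f (u z)) (u z) :=
      ((hf (u z) hmem').differentiableAt (isOpen_ball.mem_nhds hmem')).hasDerivAt
    exact h2.comp z (hu_der z hz)
  have hg_der : ∀ z ∈ ball (0 : ℂ) 1, HasDerivAt g
      ((1 - (starRingEnd ℂ) (-b) * (-b)) / (1 + (starRingEnd ℂ) (-b) * F z) ^ 2 *
        (deriv f (u z) *
          ((1 - (starRingEnd ℂ) ω * ω) / (1 + (starRingEnd ℂ) ω * z) ^ 2))) z := by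
    intro z hz
    exact (hasDerivAt_T (-b) (F z) (aux_ne (-b) (F z) hbneg (hF_lt z hz))).comp z (hF_der z hz)
  have hg_maps : MapsTo g (ball 0 1) (ball 0 1) := fun z hz =>
    (hmem _).2 (aux_maps (-b) (F z) hbneg (hF_lt z hz))
  have hg0 : g 0 = 0 := by rw [hgdef]; simp only; rw [hF0]; simp
  have hg_diff : DifferentiableOn ℂ g (ball 0 1) := fun z hz =>
    ((hg_der z hz).differentiableAt).differentiableWithinAt
  -- nonvanishing denominators at 0
  have hβ : (1 : ℂ) - (starRingEnd ℂ) b * b ≠ 0 := by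
    rw [abs_one_sub_conj_mul_self]
    simp only [ne_eq, Complex.ofReal_eq_zero]
    nlinarith [norm_nonneg b]
  have hα : (1 : ℂ) - (starRingEnd ℂ) ω * ω ≠ 0 := by
    rw [abs_one_sub_conj_mul_self]
    simp only [ne_eq, Complex.ofReal_eq_zero]
    nlinarith [norm_nonneg ω]
  have hden_b : (1 : ℂ) + (starRingEnd ℂ) (-b) * F 0 ≠ 0 := by
    rw [hF0, map_neg]
    intro hcon
    apply hβ
    linear_combination hcon
  -- pieces for the derivative of D at 0
  have hF_der0 : HasDerivAt F (deriv f ω * (1 - (starRingEnd ℂ) ω * ω)) 0 := by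
    have := hF_der 0 h0mem
    rw [hu0] at this
    convert this using 1
    simp
  have q1 : HasDerivAt (fun z => 1 + (starRingEnd ℂ) (-b) * F z)
      ((starRingEnd ℂ) (-b) * (deriv f ω * (1 - (starRingEnd ℂ) ω * ω))) 0 :=
    (hF_der0.const_mul _).const_add 1
  have q2 := q1.pow 2
  have q3 := (hasDerivAt_const (0 : ℂ) (1 - (starRingEnd ℂ) (-b) * (-b))).div q2
    (pow_ne_zero 2 hden_b)
  have hff : HasDerivAt (deriv f) (deriv (deriv f) ω) (u 0) := by
    rw [hu0]
    exact (((hf.analyticOnNhd isOpen_ball).deriv ω hωmem).differentiableAt).hasDerivAt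
  have q4 : HasDerivAt (fun z => deriv f (u z))
      (deriv (deriv f) ω * ((1 - (starRingEnd ℂ) ω * ω) / (1 + (starRingEnd ℂ) ω * 0) ^ 2)) 0 :=
    hff.comp 0 (hu_der 0 h0mem)
  have q5 : HasDerivAt (fun z : ℂ => 1 + (starRingEnd ℂ) ω * z) ((starRingEnd ℂ) ω) 0 := by
    simpa using ((hasDerivAt_id (0 : ℂ)).const_mul ((starRingEnd ℂ) ω)).const_add 1
  have q6 := q5.pow 2
  have hden_a : ((1 : ℂ) + (starRingEnd ℂ) ω * 0) ^ 2 ≠ 0 := by simp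
  have q7 := (hasDerivAt_const (0 : ℂ) (1 - (starRingEnd ℂ) ω * ω)).div q6 hden_a
  have hE := q3.mul (q4.mul q7)
  have hDg : deriv g =ᶠ[nhds (0 : ℂ)] fun z =>
      (1 - (starRingEnd ℂ) (-b) * (-b)) / (1 + (starRingEnd ℂ) (-b) * F z) ^ 2 *
        (deriv f (u z) *
          ((1 - (starRingEnd ℂ) ω * ω) / (1 + (starRingEnd ℂ) ω * z) ^ 2)) := by
    filter_upwards [isOpen_ball.mem_nhds h0mem] with z hz using (hg_der z hz).deriv
  -- clean second derivative
  have hEpoly : (1 - (starRingEnd ℂ) b * b) ^ 2 * deriv (deriv g) 0 =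
      2 * (starRingEnd ℂ) b * (deriv f ω) ^ 2 * (1 - (starRingEnd ℂ) ω * ω) ^ 2 +
        deriv (deriv f) ω * (1 - (starRingEnd ℂ) ω * ω) ^ 2 * (1 - (starRingEnd ℂ) b * b) -
        2 * (starRingEnd ℂ) ω * deriv f ω * (1 - (starRingEnd ℂ) ω * ω) *
          (1 - (starRingEnd ℂ) b * b) := by
    rw [hDg.deriv_eq]
    erw [hE.deriv]
    simp only [Pi.div_apply, Pi.mul_apply, Pi.pow_apply]
    rw [hF0, hu0]
    have e2 : (1 : ℂ) + (starRingEnd ℂ) (-b) * b = 1 - (starRingEnd ℂ) b * b := by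
      rw [map_neg]; ring
    rw [e2, map_neg]
    field_simp
    ring
  have hD0 : (1 - (starRingEnd ℂ) b * b) * deriv g 0 =
      (1 - (starRingEnd ℂ) ω * ω) * deriv f ω := by
    rw [(hg_der 0 h0mem).deriv, hF0, hu0]
    have e2 : (1 : ℂ) + (starRingEnd ℂ) (-b) * b = 1 - (starRingEnd ℂ) b * b := by
      rw [map_neg]; ring
    rw [e2, map_neg]
    field_simp
    ring
  have hcb := coeff_two_bound g hg_diff hg_maps hg0
  -- cast identities
  have hαcast : ((1 : ℂ) - (‖ω‖ : ℂ) ^ 2) = 1 - (starRingEnd ℂ) ω * ω := by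
    rw [abs_one_sub_conj_mul_self]; push_cast; ring
  have hβcast : ((1 : ℂ) - (‖b‖ : ℂ) ^ 2) = 1 - (starRingEnd ℂ) b * b := by
    rw [abs_one_sub_conj_mul_self]; push_cast; ring
  have hβR : ‖1 - (starRingEnd ℂ) b * b‖ = 1 - ‖b‖ ^ 2 := by
    rw [abs_one_sub_conj_mul_self, Complex.norm_real, Real.norm_eq_abs, abs_of_pos]
    nlinarith [norm_nonneg b]
  have hβpos : (0 : ℝ) < 1 - ‖b‖ ^ 2 := by nlinarith [norm_nonneg b]
  clear hDg hE q1 q2 q3 q4 q5 q6 q7 hff hg_der hF_der hu_der hg_diff hg_maps hg0 hu_mem hF_lt hden_b hden_a hF_der0 hmem hset hf hmap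
  clear_value b u F g
  clear hu0 hF0 hudef hFdef hgdef u F
  have hXeq : ((1 / 2) * ((1 : ℂ) - (‖ω‖ : ℂ) ^ 2) ^ 2 * deriv (deriv f) ω +
            (-(starRingEnd ℂ) ω * ((1 : ℂ) - (‖ω‖ : ℂ) ^ 2)) * deriv f ω) *
            ((1 : ℂ) - (‖b‖ : ℂ) ^ 2) +
          ((1 : ℂ) - (‖ω‖ : ℂ) ^ 2) ^ 2 * (deriv f ω) ^ 2 * (starRingEnd ℂ) b =
      (1 - (starRingEnd ℂ) b * b) ^ 2 * deriv (deriv g) 0 / 2 := by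
    rw [hαcast, hβcast]
    linear_combination -hEpoly / 2
  rw [hXeq]
  have habs2 : ‖(2 : ℂ)‖ = 2 := by simp
  rw [norm_div, norm_mul, norm_pow, hβR, habs2]
  have hfin : (1 - ‖b‖ ^ 2) * ‖deriv g 0‖ =
      ‖((1 : ℂ) - (‖ω‖ : ℂ) ^ 2) * deriv f ω‖ := by
    rw [← hβR, ← norm_mul, hD0, hαcast]
  calc (1 - ‖b‖ ^ 2) ^ 2 * ‖deriv (deriv g) 0‖ / 2
      ≤ (1 - ‖b‖ ^ 2) ^ 2 * (2 * (1 - ‖deriv g 0‖ ^ 2)) / 2 := by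
        gcongr
    _ = (1 - ‖b‖ ^ 2) ^ 2 -
          ((1 - ‖b‖ ^ 2) * ‖deriv g 0‖) ^ 2 := by ring
    _ = (1 - ‖b‖ ^ 2) ^ 2 -
          ‖((1 : ℂ) - (‖ω‖ : ℂ) ^ 2) * deriv f ω‖ ^ 2 := by rw [hfin]

end GoluzinYamashita
end

section
/- (Schwarz–Pick inequality for the polydisk.) Let n ≥ 1 and let f : ℂⁿ → ℂ be holomorphic on the open unit polydisk 𝔻ⁿ with f(𝔻ⁿ) ⊆ 𝔻 (i.e. |f(z)| < 1 for z ∈ 𝔻ⁿ). Then for all a = (a₁,…,aₙ) and b = (b₁,…,bₙ) in 𝔻ⁿ, |(f(a) − f(b))/(1 − conj(f(a))·f(b))| ≤ max over 1 ≤ i ≤ n of |(aᵢ − bᵢ)/(1 − conj(aᵢ)·bᵢ)|. -/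
open Complex Metric

noncomputable def mob (w z : ℂ) : ℂ := (w - z) / (1 - (starRingEnd ℂ) w * z)

lemma mob_denom_ne {w z : ℂ} (hw : ‖w‖ < 1) (hz : ‖z‖ < 1) :
    1 - (starRingEnd ℂ) w * z ≠ 0 := by
  intro h
  have h1 : (starRingEnd ℂ) w * z = 1 := by linear_combination -h
  have : ‖(starRingEnd ℂ) w * z‖ < 1 := by
    rw [norm_mul, Complex.norm_conj]
    calc ‖w‖ * ‖z‖ < 1 * 1 := by
          apply mul_lt_mul'' hw hz (norm_nonneg w) (norm_nonneg z)
      _ = 1 := by ring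
  rw [h1] at this; simp at this

lemma mob_normSq_key (w z : ℂ) :
    Complex.normSq (1 - (starRingEnd ℂ) w * z) - Complex.normSq (w - z)
      = (1 - Complex.normSq w) * (1 - Complex.normSq z) := by
  have h : ((Complex.normSq (1 - (starRingEnd ℂ) w * z) : ℂ)) - Complex.normSq (w - z)
      = ((1 - Complex.normSq w : ℝ) : ℂ) * ((1 - Complex.normSq z : ℝ) : ℂ) := by
    push_cast [← Complex.mul_conj]
    simp only [map_sub, map_mul, map_one, Complex.conj_conj]
    ring
  exact_mod_cast h

lemma mob_abs_lt {w z : ℂ} (hw : ‖w‖ < 1) (hz : ‖z‖ < 1) :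
    ‖mob w z‖ < 1 := by
  have hne := mob_denom_ne hw hz
  have hpos : 0 < ‖1 - (starRingEnd ℂ) w * z‖ := by
    simpa [norm_pos_iff] using hne
  rw [mob, norm_div, div_lt_one hpos]
  have hkey := mob_normSq_key w z
  have hw2 : Complex.normSq w < 1 := by
    have := Complex.sq_norm w; nlinarith [norm_nonneg w]
  have hz2 : Complex.normSq z < 1 := by
    have := Complex.sq_norm z; nlinarith [norm_nonneg z]
  have hlt : Complex.normSq (w - z) < Complex.normSq (1 - (starRingEnd ℂ) w * z) := by
    nlinarith
  have := Real.sqrt_lt_sqrt (Complex.normSq_nonneg _) hlt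
  simpa [Complex.norm_def] using this

lemma mob_self (w : ℂ) : mob w w = 0 := by simp [mob]

lemma mob_zero {w : ℂ} : mob w 0 = w := by simp [mob]

lemma mob_mob {w z : ℂ} (hw : ‖w‖ < 1) (hz : ‖z‖ < 1) :
    mob w (mob w z) = z := by
  have h1 := mob_denom_ne hw hz
  have h2 := mob_denom_ne hw (mob_abs_lt hw hz)
  have h3 : 1 - (starRingEnd ℂ) w * w ≠ 0 := mob_denom_ne hw hw
  have h3' : 1 - w * (starRingEnd ℂ) w ≠ 0 := by rwa [mul_comm] at h3
  simp only [mob] at h2 ⊢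
  rw [div_eq_iff h2]
  have h1' : 1 - z * (starRingEnd ℂ) w ≠ 0 := by rwa [mul_comm] at h1
  field_simp
  have hd : 1 - (starRingEnd ℂ) w * z - (starRingEnd ℂ) w * (w - z) ≠ 0 := by
    intro h; apply h3; linear_combination h
  ring

lemma mob_diffOn {w : ℂ} (hw : ‖w‖ < 1) :
    DifferentiableOn ℂ (mob w) (ball (0:ℂ) 1) := by
  intro z hz
  rw [mem_ball_zero_iff] at hz
  apply DifferentiableAt.differentiableWithinAt
  apply DifferentiableAt.div
  · fun_prop
  · fun_prop
  · exact mob_denom_ne hw (by simpa using hz)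

/-- One-variable Schwarz–Pick at the origin. -/
lemma schwarz_pick_one {g : ℂ → ℂ} (hd : DifferentiableOn ℂ g (ball 0 1))
    (hm : Set.MapsTo g (ball 0 1) (ball 0 1)) {r : ℝ} (hr0 : 0 ≤ r) (hr1 : r < 1) :
    ‖mob (g 0) (g r)‖ ≤ r := by
  have hg0 : ‖g 0‖ < 1 := by
    simpa [mem_ball_zero_iff] using hm (by simp [mem_ball_zero_iff] : (0:ℂ) ∈ ball (0:ℂ) 1)
  have hd' : DifferentiableOn ℂ (fun z => mob (g 0) (g z)) (ball 0 1) :=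
    (mob_diffOn hg0).comp hd (fun z hz => by
      rw [mem_ball_zero_iff]; simpa [mem_ball_zero_iff] using hm hz)
  have hm' : Set.MapsTo (fun z => mob (g 0) (g z)) (ball 0 1) (ball 0 1) := by
    intro z hz
    rw [mem_ball_zero_iff]
    exact mob_abs_lt hg0 (by simpa [mem_ball_zero_iff] using hm hz)
  have h0 : (fun z => mob (g 0) (g z)) 0 = 0 := by simp [mob_self]
  have := Complex.norm_le_norm_of_mapsTo_ball hd' (hm'.mono_right ball_subset_closedBall) h0
    (z := (r:ℂ)) (by rw [Complex.norm_real, Real.norm_of_nonneg hr0]; exact hr1)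
  rwa [Complex.norm_real, Real.norm_of_nonneg hr0] at this

/-- **The Schwarz–Pick inequality for the polydisk.** -/
theorem schwarz_pick_polydisk (n : ℕ) (hn : 1 ≤ n)
    (f : (Fin n → ℂ) → ℂ)
    (hf : DifferentiableOn ℂ f {z : Fin n → ℂ | ∀ i, ‖z i‖ < 1})
    (hmap : ∀ z : Fin n → ℂ, (∀ i, ‖z i‖ < 1) → ‖f z‖ < 1)
    (a b : Fin n → ℂ)
    (ha : ∀ i, ‖a i‖ < 1) (hb : ∀ i, ‖b i‖ < 1) :
    ‖(f a - f b) / (1 - (starRingEnd ℂ) (f a) * f b)‖ ≤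
      Finset.univ.sup' ⟨⟨0, hn⟩, Finset.mem_univ _⟩
        (fun i => ‖(a i - b i) / (1 - (starRingEnd ℂ) (a i) * b i)‖) := by
  have hne : (Finset.univ : Finset (Fin n)).Nonempty := ⟨⟨0, hn⟩, Finset.mem_univ _⟩
  set t : Fin n → ℝ := fun i => ‖mob (a i) (b i)‖ with ht
  show ‖mob (f a) (f b)‖ ≤ Finset.univ.sup' _ t
  set r : ℝ := Finset.univ.sup' hne t with hrdef
  have ht_lt : ∀ i, t i < 1 := fun i => mob_abs_lt (ha i) (hb i)
  have hr1 : r < 1 := (Finset.sup'_lt_iff hne).mpr (fun i _ => ht_lt i)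
  have hle : ∀ i, t i ≤ r := fun i => Finset.le_sup' t (Finset.mem_univ i)
  have hr0 : 0 ≤ r := le_trans (norm_nonneg _) (hle ⟨0, hn⟩)
  rcases hr0.eq_or_lt with hr | hrpos
  · -- r = 0 : a = b
    have hab : a = b := by
      funext i
      have h0 : t i = 0 := le_antisymm (by rw [hr]; exact hle i) (norm_nonneg _)
      have := norm_eq_zero.mp h0
      rw [mob, div_eq_zero_iff] at this
      rcases this with h | h
      · exact sub_eq_zero.mp h
      · exact absurd h (mob_denom_ne (ha i) (hb i))
    rw [hab, mob_self]
    simpa using hr0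
  · have hrne : (r : ℂ) ≠ 0 := by exact_mod_cast hrpos.ne'
    set c : Fin n → ℂ := fun i => mob (a i) (b i) / (r : ℂ) with hc
    have habs_r : ‖(r : ℂ)‖ = r := by
      rw [Complex.norm_real, Real.norm_of_nonneg hr0]
    have hcle : ∀ i, ‖c i‖ ≤ 1 := by
      intro i
      rw [hc, norm_div, habs_r, div_le_one hrpos]
      exact hle i
    set h : ℂ → Fin n → ℂ := fun z i => mob (a i) (c i * z) with hh
    have hcz : ∀ z : ℂ, ‖z‖ < 1 → ∀ i, ‖c i * z‖ < 1 := by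
      intro z hz i
      rw [norm_mul]
      calc ‖c i‖ * ‖z‖ ≤ 1 * ‖z‖ :=
            mul_le_mul_of_nonneg_right (hcle i) (norm_nonneg z)
        _ = ‖z‖ := one_mul _
        _ < 1 := hz
    have hmapsh : ∀ z ∈ ball (0:ℂ) 1, ∀ i, ‖h z i‖ < 1 := by
      intro z hz i
      exact mob_abs_lt (ha i) (hcz z (by simpa [mem_ball_zero_iff] using hz) i)
    set g : ℂ → ℂ := fun z => f (h z) with hg
    have hdh : DifferentiableOn ℂ h (ball (0:ℂ) 1) := by
      rw [differentiableOn_pi]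
      intro i z hz
      rw [mem_ball_zero_iff] at hz
      apply DifferentiableAt.differentiableWithinAt
      apply DifferentiableAt.div
      · fun_prop
      · fun_prop
      · exact mob_denom_ne (ha i) (hcz z hz i)
    have hgd : DifferentiableOn ℂ g (ball (0:ℂ) 1) :=
      hf.comp hdh (fun z hz => hmapsh z hz)
    have hgm : Set.MapsTo g (ball (0:ℂ) 1) (ball (0:ℂ) 1) := fun z hz =>
      mem_ball_zero_iff.2 (hmap _ (hmapsh z hz))
    have hg0 : g 0 = f a := by
      have hha : h 0 = a := by funext i; simp [hh, mob_zero]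
      show f (h 0) = f a
      rw [hha]
    have hgr : g (r : ℂ) = f b := by
      have hhb : h (r : ℂ) = b := by
        funext i
        show mob (a i) (mob (a i) (b i) / (r:ℂ) * (r:ℂ)) = b i
        rw [div_mul_cancel₀ _ hrne]
        exact mob_mob (ha i) (hb i)
      show f (h (r:ℂ)) = f b
      rw [hhb]
    have final := schwarz_pick_one hgd hgm hr0 hr1
    rwa [hg0, hgr] at final
end

section
/- (Schwarz–Pick inequality for derivatives on the polydisk.) Let n ≥ 1 and let f : ℂⁿ → ℂ be holomorphic on the open unit polydisk 𝔻ⁿ with f(𝔻ⁿ) ⊆ 𝔻 (i.e. |f(z)| < 1 for z ∈ 𝔻ⁿ). Then for every a = (a₁,…,aₙ) ∈ 𝔻ⁿ, the sum over i = 1,…,n of (1 − |aᵢ|²)·|∂f/∂zᵢ(a)| is at most 1 − |f(a)|². -/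
open Complex Metric Set

lemma normSq_mobius_key (b w : ℂ) :
    Complex.normSq (1 - (starRingEnd ℂ) b * w) - Complex.normSq (w - b)
      = (1 - Complex.normSq b) * (1 - Complex.normSq w) := by
  apply Complex.ofReal_injective
  push_cast [← Complex.mul_conj]
  simp only [map_sub, map_mul, map_one, Complex.conj_conj]
  ring

lemma mobius_denom_ne {b w : ℂ} (hb : ‖b‖ < 1) (hw : ‖w‖ < 1) :
    1 - (starRingEnd ℂ) b * w ≠ 0 := by
  intro h
  have h1 : (1 : ℂ) = (starRingEnd ℂ) b * w := by linear_combination h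
  have : (1 : ℝ) = ‖(starRingEnd ℂ) b * w‖ := by rw [← h1]; simp
  rw [norm_mul, Complex.norm_conj] at this
  nlinarith [norm_nonneg b, norm_nonneg w]

lemma mobius_abs_lt {b w : ℂ} (hb : ‖b‖ < 1) (hw : ‖w‖ < 1) :
    ‖(w - b) / (1 - (starRingEnd ℂ) b * w)‖ < 1 := by
  have hd := mobius_denom_ne hb hw
  rw [norm_div, div_lt_one (norm_pos_iff.mpr hd)]
  have key := normSq_mobius_key b w
  have h1 : Complex.normSq b < 1 := by
    rw [← Complex.sq_norm]; nlinarith [norm_nonneg b]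
  have h2 : Complex.normSq w < 1 := by
    rw [← Complex.sq_norm]; nlinarith [norm_nonneg w]
  have h3 : Complex.normSq (w - b) < Complex.normSq (1 - (starRingEnd ℂ) b * w) := by
    nlinarith
  rw [← Complex.sq_norm, ← Complex.sq_norm] at h3
  nlinarith [norm_nonneg (w - b), norm_nonneg (1 - (starRingEnd ℂ) b * w)]

/-- One-variable Schwarz–Pick at the origin. -/
lemma schwarz_pick_one_s7 {g : ℂ → ℂ} (hd : DifferentiableOn ℂ g (ball 0 1))
    (hm : MapsTo g (ball 0 1) (ball 0 1)) :
    ‖deriv g 0‖ ≤ 1 - ‖g 0‖ ^ 2 := by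
  set b := g 0 with hb0
  have hb : ‖b‖ < 1 := by
    have := hm (mem_ball_self one_pos)
    simpa [mem_ball, dist_zero_right] using this
  set ψ : ℂ → ℂ := fun w => (w - b) / (1 - (starRingEnd ℂ) b * w) with hψ
  set h : ℂ → ℂ := fun ζ => ψ (g ζ) with hh
  have habs : ∀ w ∈ ball (0:ℂ) 1, ‖w‖ < 1 := by
    intro w hw; simpa [mem_ball, dist_zero_right] using hw
  have hdh : DifferentiableOn ℂ h (ball 0 1) := by
    intro ζ hζ
    have hgw : ‖g ζ‖ < 1 := habs _ (hm hζ)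
    have hden := mobius_denom_ne hb hgw
    have hgd : DifferentiableAt ℂ g ζ :=
      (hd ζ hζ).differentiableAt (isOpen_ball.mem_nhds hζ)
    exact (((hgd.sub_const b).div
      ((differentiableAt_const 1).sub (hgd.const_mul _)) hden)).differentiableWithinAt
  have hmh : MapsTo h (ball 0 1) (ball 0 1) := by
    intro ζ hζ
    have : ‖h ζ‖ < 1 := mobius_abs_lt hb (habs _ (hm hζ))
    simpa [mem_ball, dist_zero_right] using this
  have hh0 : h 0 = 0 := by
    simp [hh, hψ, hb0]
  -- derivative of h at 0
  have hgd0 : DifferentiableAt ℂ g 0 :=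
    (hd 0 (mem_ball_self one_pos)).differentiableAt
      (isOpen_ball.mem_nhds (mem_ball_self one_pos))
  have hden0 : (1 : ℂ) - (starRingEnd ℂ) b * b ≠ 0 := mobius_denom_ne hb hb
  have hψd : HasDerivAt ψ (1 / (1 - (starRingEnd ℂ) b * b)) b := by
    have h1 : HasDerivAt (fun w : ℂ => w - b) 1 b := (hasDerivAt_id b).sub_const b
    have h2 : HasDerivAt (fun w : ℂ => 1 - (starRingEnd ℂ) b * w)
        (-((starRingEnd ℂ) b)) b := by
      simpa using ((hasDerivAt_id b).const_mul ((starRingEnd ℂ) b)).const_sub 1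
    have := h1.div h2 hden0
    refine this.congr_deriv ?_
    rw [sub_self, zero_mul, sub_zero, one_mul, sq, div_mul_cancel_right₀ hden0, one_div]
  have hhd : HasDerivAt h (1 / (1 - (starRingEnd ℂ) b * b) * deriv g 0) 0 := by
    exact hψd.comp 0 hgd0.hasDerivAt
  have hder : ‖deriv h 0‖ ≤ 1 :=
    Complex.norm_deriv_le_one_of_mapsTo_ball hdh
      (hmh.mono_right (by rw [hh0]; exact ball_subset_closedBall)) one_pos
  rw [hhd.deriv] at hder
  have hcc : (starRingEnd ℂ) b * b = (Complex.normSq b : ℂ) := by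
    rw [mul_comm, Complex.mul_conj]
  have hns : ‖(1 : ℂ) - (starRingEnd ℂ) b * b‖ = 1 - ‖b‖ ^ 2 := by
    rw [hcc, ← Complex.ofReal_one, ← Complex.ofReal_sub, Complex.norm_real, Real.norm_eq_abs,
      ← Complex.sq_norm, _root_.abs_of_nonneg]
    nlinarith [norm_nonneg b]
  rw [norm_mul, norm_div, norm_one, hns] at hder
  have hpos : 0 < 1 - ‖b‖ ^ 2 := by nlinarith [norm_nonneg b]
  rw [div_mul_eq_mul_div, one_mul, div_le_one hpos] at hder
  exact hder

/-- **The Schwarz–Pick inequality for derivatives on the polydisk.** -/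
theorem schwarz_pick_polydisk_deriv (n : ℕ) (hn : 1 ≤ n)
    (f : (Fin n → ℂ) → ℂ)
    (hf : DifferentiableOn ℂ f {z : Fin n → ℂ | ∀ i, ‖z i‖ < 1})
    (hmap : ∀ z : Fin n → ℂ, (∀ i, ‖z i‖ < 1) → ‖f z‖ < 1)
    (a : Fin n → ℂ) (ha : ∀ i, ‖a i‖ < 1) :
    ∑ i : Fin n, (1 - ‖a i‖ ^ 2) * ‖fderiv ℂ f a (Pi.single i 1)‖ ≤
      1 - ‖f a‖ ^ 2 := by
  set S : Set (Fin n → ℂ) := {z : Fin n → ℂ | ∀ i, ‖z i‖ < 1} with hS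
  have hSopen : IsOpen S := by
    have : S = Set.pi Set.univ (fun _ : Fin n => ball (0:ℂ) 1) := by
      ext z; simp [hS, Set.mem_pi, mem_ball, dist_zero_right]
    rw [this]
    exact isOpen_set_pi Set.finite_univ fun i _ => isOpen_ball
  set L := fderiv ℂ f a with hL
  set D : Fin n → ℂ := fun i => L (Pi.single i 1) with hD
  set ε : Fin n → ℂ := fun i => if h : D i = 0 then 1 else (‖D i‖ : ℂ) / D i
    with hε
  have hεabs : ∀ i, ‖ε i‖ = 1 := by
    intro i
    by_cases h : D i = 0
    · simp [hε, h]
    · have : ‖(‖D i‖ : ℂ) / D i‖ = 1 := by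
        rw [norm_div, Complex.norm_real, Real.norm_eq_abs, _root_.abs_of_nonneg (norm_nonneg _),
          div_self (norm_ne_zero_iff.mpr h)]
      simpa [hε, h] using this
  have hεD : ∀ i, ε i * D i = (‖D i‖ : ℂ) := by
    intro i
    by_cases h : D i = 0
    · simp [hε, h]
    · simp only [hε, h, dif_neg, not_false_iff]
      field_simp
  -- the analytic disc
  set φ : ℂ → (Fin n → ℂ) :=
    fun ζ i => (a i + ε i * ζ) / (1 + (starRingEnd ℂ) (a i) * (ε i * ζ)) with hφ
  have hφform : ∀ ζ i, φ ζ i =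
      ((ε i * ζ) - (-(a i))) / (1 - (starRingEnd ℂ) (-(a i)) * (ε i * ζ)) := by
    intro ζ i; simp [hφ]; ring_nf
  have hφmem : ∀ ζ : ℂ, ‖ζ‖ < 1 → φ ζ ∈ S := by
    intro ζ hζ i
    rw [hφform]
    apply mobius_abs_lt
    · simpa using ha i
    · rw [norm_mul, hεabs i, one_mul]; exact hζ
  have hφ0 : φ 0 = a := by
    funext i; simp [hφ]
  -- denominators
  have hden : ∀ ζ : ℂ, ‖ζ‖ < 1 → ∀ i,
      (1 : ℂ) + (starRingEnd ℂ) (a i) * (ε i * ζ) ≠ 0 := by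
    intro ζ hζ i
    have := mobius_denom_ne (b := -(a i)) (w := ε i * ζ)
      (by simpa using ha i) (by rw [norm_mul, hεabs i, one_mul]; exact hζ)
    intro h; apply this
    rw [← h]; simp
  -- derivative of each component of φ at 0
  have hφd : ∀ i, HasDerivAt (fun ζ => φ ζ i)
      (ε i * (1 - (Complex.normSq (a i) : ℂ))) 0 := by
    intro i
    have h1 : HasDerivAt (fun ζ : ℂ => a i + ε i * ζ) (ε i) 0 := by
      simpa using ((hasDerivAt_id (0:ℂ)).const_mul (ε i)).const_add (a i)
    have h2 : HasDerivAt (fun ζ : ℂ => 1 + (starRingEnd ℂ) (a i) * (ε i * ζ))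
        ((starRingEnd ℂ) (a i) * ε i) 0 := by
      have := ((hasDerivAt_id (0:ℂ)).const_mul (ε i)).const_mul ((starRingEnd ℂ) (a i))
      simpa [mul_assoc] using this.const_add 1
    have h0 : (1 : ℂ) + (starRingEnd ℂ) (a i) * (ε i * 0) ≠ 0 := by simp
    have := h1.div h2 h0
    refine this.congr_deriv ?_
    symm
    have hcc : a i * (starRingEnd ℂ) (a i) = (Complex.normSq (a i) : ℂ) :=
      Complex.mul_conj (a i)
    field_simp
    linear_combination ε i * hcc
  have hφderiv : HasDerivAt φ (fun i => ε i * (1 - (Complex.normSq (a i) : ℂ))) 0 :=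
    hasDerivAt_pi.mpr hφd
  -- f differentiable at a
  have hfa : DifferentiableAt ℂ f a :=
    (hf a ha).differentiableAt (hSopen.mem_nhds ha)
  have hLd : HasFDerivAt f L a := hfa.hasFDerivAt
  -- g = f ∘ φ
  set g : ℂ → ℂ := fun ζ => f (φ ζ) with hg
  have hgd : HasDerivAt g (L (fun i => ε i * (1 - (Complex.normSq (a i) : ℂ)))) 0 := by
    have hLd' : HasFDerivAt f L (φ 0) := by rw [hφ0]; exact hLd
    exact hLd'.comp_hasDerivAt 0 hφderiv
  -- L applied to the vector
  have hvsum : (fun i => ε i * (1 - (Complex.normSq (a i) : ℂ)))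
      = ∑ i : Fin n, (ε i * (1 - (Complex.normSq (a i) : ℂ))) • (Pi.single i 1 : Fin n → ℂ) := by
    funext j
    simp [Finset.sum_apply, Pi.single_apply]
  have hLv : L (fun i => ε i * (1 - (Complex.normSq (a i) : ℂ)))
      = ((∑ i : Fin n, (1 - ‖a i‖ ^ 2) * ‖D i‖ : ℝ) : ℂ) := by
    rw [hvsum, map_sum]
    push_cast
    apply Finset.sum_congr rfl
    intro i _
    rw [ContinuousLinearMap.map_smul, smul_eq_mul]
    have hDi : L (Pi.single i 1) = D i := rfl
    rw [hDi]
    have h2 := hεD i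
    push_cast [← Complex.sq_norm]
    linear_combination (1 - ((‖a i‖ : ℂ)) ^ 2) * h2
  -- apply one-variable Schwarz–Pick
  have hgdiff : DifferentiableOn ℂ g (ball 0 1) := by
    intro ζ hζ
    have hζ' : ‖ζ‖ < 1 := by simpa [mem_ball, dist_zero_right] using hζ
    have hφdiff : DifferentiableAt ℂ φ ζ := by
      rw [differentiableAt_pi]
      intro i
      exact ((differentiableAt_const (a i)).add
        ((differentiableAt_id.const_mul (ε i)))).div
        ((differentiableAt_const 1).add
          ((differentiableAt_id.const_mul (ε i)).const_mul _)) (hden ζ hζ' i)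
    have hfd : DifferentiableAt ℂ f (φ ζ) :=
      (hf _ (hφmem ζ hζ')).differentiableAt (hSopen.mem_nhds (hφmem ζ hζ'))
    exact (hfd.comp ζ hφdiff).differentiableWithinAt
  have hgm : MapsTo g (ball 0 1) (ball 0 1) := by
    intro ζ hζ
    have hζ' : ‖ζ‖ < 1 := by simpa [mem_ball, dist_zero_right] using hζ
    have := hmap (φ ζ) (hφmem ζ hζ')
    simpa [hg, mem_ball, dist_zero_right] using this
  have hsp := schwarz_pick_one_s7 hgdiff hgm
  rw [hgd.deriv, hLv] at hsp
  have hg0 : g 0 = f a := by rw [hg]; simp [hφ0]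
  rw [hg0] at hsp
  rw [Complex.norm_real, Real.norm_eq_abs] at hsp
  have hnn : 0 ≤ ∑ i : Fin n, (1 - ‖a i‖ ^ 2) * ‖D i‖ := by
    apply Finset.sum_nonneg
    intro i _
    apply mul_nonneg _ (norm_nonneg _)
    nlinarith [ha i, norm_nonneg (a i)]
  rw [_root_.abs_of_nonneg hnn] at hsp
  exact hsp
end

section
/- (Schwarz–Pick inequality on a distinguished variety, continuous case.) Let a = (a₁,a₂) and b = (b₁,b₂) be points of the open bidisk 𝔻². Then there exists a distinguished variety V ∩ 𝔻² (with V = Z(q) the zero set of a polynomial q ∈ ℂ[z,w]) such that for every function f : ℂ² → ℂ that is continuous on the closed bidisk, holomorphic on 𝔻², and satisfies |f(z)| ≤ 1 for all z ∈ V ∩ 𝔻², one has |f(a) − f(b)| ≤ M · |1 − conj(f(a))·f(b)|, where M = max( |a₁ − b₁|/|1 − conj(a₁)·b₁| , |a₂ − b₂|/|1 − conj(a₂)·b₂| ). -/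
open Complex Metric Filter Topology


/-- The open bidisk `𝔻² ⊆ ℂ²`. -/
def openBidisk : Set (ℂ × ℂ) := {z | ‖z.1‖ < 1 ∧ ‖z.2‖ < 1}

/-- The closed bidisk. -/
def closedBidisk : Set (ℂ × ℂ) := {z | ‖z.1‖ ≤ 1 ∧ ‖z.2‖ ≤ 1}

/-- The torus `𝕋²`, the distinguished boundary of the bidisk. -/
def torus : Set (ℂ × ℂ) := {z | ‖z.1‖ = 1 ∧ ‖z.2‖ = 1}

/-- The zero set in `ℂ²` of a polynomial in two variables. -/
def zeroSet (q : MvPolynomial (Fin 2) ℂ) : Set (ℂ × ℂ) :=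
  {z | MvPolynomial.eval ![z.1, z.2] q = 0}

/-- Compatibility: the complex absolute value as a bundled absolute value (the norm). -/
noncomputable def Complex.abs : AbsoluteValue ℂ ℝ where
  toFun z := ‖z‖
  map_mul' := norm_mul
  nonneg' := norm_nonneg
  eq_zero' _ := norm_eq_zero
  add_le' := norm_add_le

lemma Complex.abs_conj (z : ℂ) : Complex.abs ((starRingEnd ℂ) z) = Complex.abs z :=
  Complex.norm_conj z

lemma Complex.sq_abs (z : ℂ) : Complex.abs z ^ 2 = Complex.normSq z := Complex.sq_norm z

lemma Complex.abs_apply (z : ℂ) : Complex.abs z = Real.sqrt (Complex.normSq z) := Complex.norm_def z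

lemma Complex.abs_ofReal (r : ℝ) : Complex.abs (r : ℂ) = |r| := Complex.norm_real r

@[continuity]
lemma Complex.continuous_abs : Continuous (⇑Complex.abs) := continuous_norm

lemma Complex.abs_eq_norm (z : ℂ) : Complex.abs z = ‖z‖ := rfl

noncomputable def mo (α z : ℂ) : ℂ := (α - z) / (1 - (starRingEnd ℂ) α * z)

lemma mo_den_ne {α z : ℂ} (hα : Complex.abs α < 1) (hz : Complex.abs z ≤ 1) :
    1 - (starRingEnd ℂ) α * z ≠ 0 := by
  intro h
  have h1 : (starRingEnd ℂ) α * z = 1 := by linear_combination -h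
  have := congrArg Complex.abs h1
  rw [map_mul, map_one, Complex.abs_conj] at this
  nlinarith [Complex.abs.nonneg α, Complex.abs.nonneg z]

lemma mo_key (α z : ℂ) :
    Complex.normSq (1 - (starRingEnd ℂ) α * z) - Complex.normSq (α - z)
      = (1 - Complex.normSq α) * (1 - Complex.normSq z) := by
  have h : ((1 - (starRingEnd ℂ) α * z) * (starRingEnd ℂ) (1 - (starRingEnd ℂ) α * z)
      - (α - z) * (starRingEnd ℂ) (α - z) : ℂ)
      = (1 - α * (starRingEnd ℂ) α) * (1 - z * (starRingEnd ℂ) z) := by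
    simp only [map_sub, map_mul, map_one, Complex.conj_conj]
    ring
  rw [Complex.mul_conj, Complex.mul_conj, Complex.mul_conj, Complex.mul_conj] at h
  exact_mod_cast h

lemma mo_abs_le {α z : ℂ} (hα : Complex.abs α < 1) (hz : Complex.abs z ≤ 1) :
    Complex.abs (α - z) ≤ Complex.abs (1 - (starRingEnd ℂ) α * z) := by
  have h := mo_key α z
  have h1 : Complex.normSq α < 1 := by
    rw [← Complex.sq_abs]; nlinarith [Complex.abs.nonneg α]
  have h2 : Complex.normSq z ≤ 1 := by
    rw [← Complex.sq_abs]; nlinarith [Complex.abs.nonneg z]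
  have : Complex.normSq (α - z) ≤ Complex.normSq (1 - (starRingEnd ℂ) α * z) := by nlinarith
  rw [Complex.abs_apply, Complex.abs_apply]
  exact Real.sqrt_le_sqrt this

lemma mo_abs_lt {α z : ℂ} (hα : Complex.abs α < 1) (hz : Complex.abs z < 1) :
    Complex.abs (α - z) < Complex.abs (1 - (starRingEnd ℂ) α * z) := by
  have h := mo_key α z
  have h1 : Complex.normSq α < 1 := by
    rw [← Complex.sq_abs]; nlinarith [Complex.abs.nonneg α]
  have h2 : Complex.normSq z < 1 := by
    rw [← Complex.sq_abs]; nlinarith [Complex.abs.nonneg z]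
  have : Complex.normSq (α - z) < Complex.normSq (1 - (starRingEnd ℂ) α * z) := by nlinarith
  rw [Complex.abs_apply, Complex.abs_apply]
  exact Real.sqrt_lt_sqrt (Complex.normSq_nonneg _) this

lemma mo_abs_eq {α z : ℂ} (hz : Complex.abs z = 1) :
    Complex.abs (α - z) = Complex.abs (1 - (starRingEnd ℂ) α * z) := by
  have h := mo_key α z
  have h2 : Complex.normSq z = 1 := by rw [← Complex.sq_abs, hz]; norm_num
  have h3 : (1 - Complex.normSq α) * (1 - Complex.normSq z) = 0 := by rw [h2]; ring
  have : Complex.normSq (α - z) = Complex.normSq (1 - (starRingEnd ℂ) α * z) := by linarith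
  rw [Complex.abs_apply, Complex.abs_apply, this]

lemma mo_abs {α z : ℂ} :
    Complex.abs (mo α z) = Complex.abs (α - z) / Complex.abs (1 - (starRingEnd ℂ) α * z) :=
  map_div₀ _ _ _

lemma mo_abs_le_one {α z : ℂ} (hα : Complex.abs α < 1) (hz : Complex.abs z ≤ 1) :
    Complex.abs (mo α z) ≤ 1 := by
  rw [mo_abs]
  exact div_le_one_of_le₀ (mo_abs_le hα hz) (Complex.abs.nonneg _)

lemma mo_abs_lt_one {α z : ℂ} (hα : Complex.abs α < 1) (hz : Complex.abs z < 1) :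
    Complex.abs (mo α z) < 1 := by
  rw [mo_abs]
  have hd : 0 < Complex.abs (1 - (starRingEnd ℂ) α * z) :=
    Complex.abs.pos (mo_den_ne hα hz.le)
  rw [div_lt_one hd]; exact mo_abs_lt hα hz

lemma mo_abs_eq_one {α z : ℂ} (hα : Complex.abs α < 1) (hz : Complex.abs z = 1) :
    Complex.abs (mo α z) = 1 := by
  rw [mo_abs, mo_abs_eq hz, div_self]
  exact Complex.abs.ne_zero (mo_den_ne hα hz.le)

lemma mo_invol {α z : ℂ} (hα : Complex.abs α < 1) (hz : Complex.abs z ≤ 1) :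
    mo α (mo α z) = z := by
  have hd : 1 - (starRingEnd ℂ) α * z ≠ 0 := mo_den_ne hα hz
  have hαα : 1 - (starRingEnd ℂ) α * α ≠ 0 := mo_den_ne hα hα.le
  have hnum : α - mo α z = z * (1 - (starRingEnd ℂ) α * α) / (1 - (starRingEnd ℂ) α * z) := by
    rw [eq_div_iff hd]; unfold mo; rw [sub_mul, div_mul_cancel₀ _ hd]; ring
  have hden : 1 - (starRingEnd ℂ) α * mo α z
      = (1 - (starRingEnd ℂ) α * α) / (1 - (starRingEnd ℂ) α * z) := by
    unfold mo; field_simp; ring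
  conv_lhs => rw [mo]
  rw [hnum, hden, div_div_div_cancel_right₀ hd, mul_div_cancel_right₀ _ hαα]

lemma mo_diffAt {α z : ℂ} (h : 1 - (starRingEnd ℂ) α * z ≠ 0) :
    DifferentiableAt ℂ (mo α) z := by
  unfold mo
  exact ((differentiableAt_const α).sub differentiableAt_id).div
    ((differentiableAt_const 1).sub ((differentiableAt_const _).mul differentiableAt_id)) h

lemma sp_strict (h : ℂ → ℂ) (hd : DifferentiableOn ℂ h (ball 0 1))
    (hb : ∀ z ∈ ball (0:ℂ) 1, Complex.abs (h z) < 1)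
    {a b : ℂ} (ha : Complex.abs a < 1) (hb' : Complex.abs b < 1) :
    Complex.abs (h a - h b) * Complex.abs (1 - (starRingEnd ℂ) a * b)
      ≤ Complex.abs (a - b) * Complex.abs (1 - (starRingEnd ℂ) (h a) * h b) := by
  have hmem : ∀ z : ℂ, Complex.abs z < 1 → z ∈ ball (0:ℂ) 1 := by
    intro z hz; simpa [mem_ball, dist_eq, Complex.abs.eq_1] using hz
  have habs : ∀ z : ℂ, z ∈ ball (0:ℂ) 1 → Complex.abs z < 1 := by
    intro z hz; exact mem_ball_zero_iff.mp hz
  set α := h a with hα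
  have hαlt : Complex.abs α < 1 := hb a (hmem a ha)
  set F : ℂ → ℂ := fun z => mo α (h (mo a z)) with hF
  have hmapsF : ∀ z ∈ ball (0:ℂ) 1, F z ∈ ball (0:ℂ) 1 := by
    intro z hz
    exact hmem _ (mo_abs_lt_one hαlt (hb _ (hmem _ (mo_abs_lt_one ha (habs z hz)))))
  have hdF : DifferentiableOn ℂ F (ball 0 1) := by
    intro z hz
    have h1 : Complex.abs z < 1 := habs z hz
    have hmoz : Complex.abs (mo a z) < 1 := mo_abs_lt_one ha h1
    have d1 : DifferentiableAt ℂ (mo a) z := mo_diffAt (mo_den_ne ha h1.le)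
    have d2 : DifferentiableAt ℂ h (mo a z) :=
      (hd (mo a z) (hmem _ hmoz)).differentiableAt (isOpen_ball.mem_nhds (hmem _ hmoz))
    have d3 : DifferentiableAt ℂ (mo α) (h (mo a z)) :=
      mo_diffAt (mo_den_ne hαlt (hb _ (hmem _ hmoz)).le)
    exact ((d3.comp _ d2).comp _ d1).differentiableWithinAt
  have hF0 : F 0 = 0 := by
    have : mo a 0 = a := by simp [mo]
    rw [hF]; simp only [this, ← hα]
    simp [mo]
  have key : Complex.abs (F (mo a b)) ≤ Complex.abs (mo a b) := Complex.norm_le_norm_of_mapsTo_ball hdF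
    (fun z hz => ball_subset_closedBall (hmapsF z hz)) hF0 (show Complex.abs (mo a b) < 1 from mo_abs_lt_one ha hb')
  have hFmab : F (mo a b) = mo α (h b) := by rw [hF]; simp [mo_invol ha hb'.le]
  rw [hFmab] at key
  -- key : abs (mo α (h b)) ≤ abs (mo a b)
  rw [mo_abs, mo_abs] at key
  have hd1 : 0 < Complex.abs (1 - (starRingEnd ℂ) α * h b) :=
    Complex.abs.pos (mo_den_ne hαlt (hb b (hmem b hb')).le)
  have hd2 : 0 < Complex.abs (1 - (starRingEnd ℂ) a * b) :=
    Complex.abs.pos (mo_den_ne ha hb'.le)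
  rw [div_le_div_iff₀ hd1 hd2] at key
  calc Complex.abs (h a - h b) * Complex.abs (1 - (starRingEnd ℂ) a * b)
      = Complex.abs (α - h b) * Complex.abs (1 - (starRingEnd ℂ) a * b) := by rw [hα]
    _ ≤ Complex.abs (a - b) * Complex.abs (1 - (starRingEnd ℂ) α * h b) := key
    _ = Complex.abs (a - b) * Complex.abs (1 - (starRingEnd ℂ) (h a) * h b) := by rw [hα]

lemma sp (g : ℂ → ℂ) (hd : DifferentiableOn ℂ g (ball 0 1))
    (hb : ∀ z ∈ ball (0:ℂ) 1, Complex.abs (g z) ≤ 1)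
    {a b : ℂ} (ha : Complex.abs a < 1) (hb' : Complex.abs b < 1) :
    Complex.abs (g a - g b)
      ≤ Complex.abs (a - b) / Complex.abs (1 - (starRingEnd ℂ) a * b)
        * Complex.abs (1 - (starRingEnd ℂ) (g a) * g b) := by
  have hd2 : 0 < Complex.abs (1 - (starRingEnd ℂ) a * b) :=
    Complex.abs.pos (mo_den_ne ha hb'.le)
  rw [div_mul_eq_mul_div, le_div_iff₀ hd2]
  -- product form; prove by limit over t → 1⁻
  have hstep : ∀ t : ℝ, t ∈ Set.Ioo (0:ℝ) 1 →
      t * (Complex.abs (g a - g b) * Complex.abs (1 - (starRingEnd ℂ) a * b))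
        ≤ Complex.abs (a - b)
          * Complex.abs (1 - (t:ℂ)^2 * ((starRingEnd ℂ) (g a) * g b)) := by
    intro t ht
    have h0 : (0:ℝ) < t := ht.1
    have h1 : t < 1 := ht.2
    have := sp_strict (fun z => (t:ℂ) * g z)
      (fun z hz => ((differentiableAt_const _).mul
          ((hd z hz).differentiableAt (isOpen_ball.mem_nhds hz))).differentiableWithinAt)
      (fun z hz => by
        have := hb z hz
        rw [map_mul, Complex.abs_ofReal, abs_of_pos h0]
        nlinarith [Complex.abs.nonneg (g z)])
      ha hb'
    have e1 : (t:ℂ) * g a - (t:ℂ) * g b = (t:ℂ) * (g a - g b) := by ring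
    have e2 : 1 - (starRingEnd ℂ) ((t:ℂ) * g a) * ((t:ℂ) * g b)
        = 1 - (t:ℂ)^2 * ((starRingEnd ℂ) (g a) * g b) := by
      simp only [map_mul, Complex.conj_ofReal]; ring
    rw [e1, e2, map_mul, Complex.abs_ofReal, abs_of_pos h0] at this
    linarith [this]
  have hne : (𝓝[Set.Ioo (0:ℝ) 1] 1).NeBot := by
    apply mem_closure_iff_nhdsWithin_neBot.mp
    rw [closure_Ioo (by norm_num : (0:ℝ) ≠ 1)]
    exact Set.right_mem_Icc.mpr (by norm_num)
  have hlhs : Filter.Tendsto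
      (fun t : ℝ => t * (Complex.abs (g a - g b) * Complex.abs (1 - (starRingEnd ℂ) a * b)))
      (𝓝[Set.Ioo (0:ℝ) 1] 1)
      (𝓝 (Complex.abs (g a - g b) * Complex.abs (1 - (starRingEnd ℂ) a * b))) := by
    have : Continuous (fun t : ℝ => t * (Complex.abs (g a - g b) * Complex.abs (1 - (starRingEnd ℂ) a * b))) := by continuity
    have := this.tendsto 1
    rw [one_mul] at this
    exact this.mono_left nhdsWithin_le_nhds
  have hrhs : Filter.Tendsto
      (fun t : ℝ => Complex.abs (a - b)
          * Complex.abs (1 - (t:ℂ)^2 * ((starRingEnd ℂ) (g a) * g b)))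
      (𝓝[Set.Ioo (0:ℝ) 1] 1)
      (𝓝 (Complex.abs (a - b) * Complex.abs (1 - (starRingEnd ℂ) (g a) * g b))) := by
    have hc : Continuous (fun t : ℝ => Complex.abs (a - b)
        * Complex.abs (1 - (t:ℂ)^2 * ((starRingEnd ℂ) (g a) * g b))) := by continuity
    have h2 := (hc.tendsto 1).mono_left (nhdsWithin_le_nhds (s := Set.Ioo (0:ℝ) 1))
    simpa using h2
  exact le_of_tendsto_of_tendsto hlhs hrhs (eventually_nhdsWithin_of_forall hstep)

lemma isOpen_openBidisk : IsOpen openBidisk := by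
  have : openBidisk = ((fun z : ℂ × ℂ => Complex.abs z.1) ⁻¹' Set.Iio 1)
      ∩ ((fun z : ℂ × ℂ => Complex.abs z.2) ⁻¹' Set.Iio 1) := by
    ext z; simp [openBidisk, Set.mem_setOf_eq]; exact Iff.rfl
  rw [this]
  exact ((isOpen_Iio.preimage (Complex.continuous_abs.comp continuous_fst)).inter
    (isOpen_Iio.preimage (Complex.continuous_abs.comp continuous_snd)))

lemma isClosed_closedBidisk : IsClosed closedBidisk := by
  have : closedBidisk = ((fun z : ℂ × ℂ => Complex.abs z.1) ⁻¹' Set.Iic 1)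
      ∩ ((fun z : ℂ × ℂ => Complex.abs z.2) ⁻¹' Set.Iic 1) := by
    ext z; simp [closedBidisk, Set.mem_setOf_eq]; exact Iff.rfl
  rw [this]
  exact ((isClosed_Iic.preimage (Complex.continuous_abs.comp continuous_fst)).inter
    (isClosed_Iic.preimage (Complex.continuous_abs.comp continuous_snd)))

lemma key (a b : ℂ × ℂ) (ha1 : Complex.abs a.1 < 1) (ha2 : Complex.abs a.2 < 1)
    (hb1 : Complex.abs b.1 < 1) (hb2 : Complex.abs b.2 < 1)
    (N D : ℂ → ℂ) (NP DP : MvPolynomial (Fin 2) ℂ)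
    (hNd : Differentiable ℂ N) (hDd : Differentiable ℂ D)
    (hNP : ∀ z w : ℂ, MvPolynomial.eval ![z, w] NP = N z)
    (hDP : ∀ z w : ℂ, MvPolynomial.eval ![z, w] DP = D z)
    (hD0 : ∀ z, Complex.abs z ≤ 1 → D z ≠ 0)
    (hle : ∀ z, Complex.abs z ≤ 1 → Complex.abs (N z) ≤ Complex.abs (D z))
    (hltN : ∀ z, Complex.abs z < 1 → Complex.abs (N z) < Complex.abs (D z))
    (heqN : ∀ z, Complex.abs z = 1 → Complex.abs (N z) = Complex.abs (D z))
    (hNa : N a.1 = 0)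
    (hvb : N b.1 = mo a.2 b.2 * D b.1) :
    ∃ q : MvPolynomial (Fin 2) ℂ,
      (zeroSet q ∩ openBidisk).Nonempty ∧
      closure (zeroSet q ∩ openBidisk) ∩ frontier openBidisk ⊆ torus ∧
      ∀ f : ℂ × ℂ → ℂ, ContinuousOn f closedBidisk → DifferentiableOn ℂ f openBidisk →
        (∀ z ∈ zeroSet q ∩ openBidisk, Complex.abs (f z) ≤ 1) →
        Complex.abs (f a - f b) ≤
          max (Complex.abs (a.1 - b.1) / Complex.abs (1 - (starRingEnd ℂ) a.1 * b.1))
              (Complex.abs (a.2 - b.2) / Complex.abs (1 - (starRingEnd ℂ) a.2 * b.2)) *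
            Complex.abs (1 - (starRingEnd ℂ) (f a) * f b) := by
  classical
  set q : MvPolynomial (Fin 2) ℂ :=
    (MvPolynomial.C a.2 - MvPolynomial.X 1) * DP
      - (MvPolynomial.C 1 - MvPolynomial.C ((starRingEnd ℂ) a.2) * MvPolynomial.X 1) * NP
    with hq
  have heval : ∀ z w : ℂ, MvPolynomial.eval ![z, w] q
      = (a.2 - w) * D z - (1 - (starRingEnd ℂ) a.2 * w) * N z := by
    intro z w
    simp [hq, hNP z w, hDP z w]
  -- nonvanishing of the denominator of φ
  have hQ0 : ∀ z, Complex.abs z ≤ 1 → D z - (starRingEnd ℂ) a.2 * N z ≠ 0 := by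
    intro z hz h
    have hD := hD0 z hz
    have h1 : Complex.abs (D z) = Complex.abs ((starRingEnd ℂ) a.2 * N z) := by
      rw [show D z = (starRingEnd ℂ) a.2 * N z by linear_combination h]
    rw [map_mul, Complex.abs_conj] at h1
    have h2 := hle z hz
    have h3 := Complex.abs.pos hD
    nlinarith [Complex.abs.nonneg (N z), Complex.abs.nonneg a.2]
  set φ : ℂ → ℂ := fun z => (a.2 * D z - N z) / (D z - (starRingEnd ℂ) a.2 * N z) with hφ
  have hφmo : ∀ z, Complex.abs z ≤ 1 → φ z = mo a.2 (N z / D z) := by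
    intro z hz
    have hD := hD0 z hz
    have e1 : a.2 - N z / D z = (a.2 * D z - N z) / D z := by field_simp
    have e2 : 1 - (starRingEnd ℂ) a.2 * (N z / D z)
        = (D z - (starRingEnd ℂ) a.2 * N z) / D z := by field_simp
    rw [hφ, mo, e1, e2, div_div_div_cancel_right₀ hD]
  have hvabs : ∀ z, Complex.abs z ≤ 1 → Complex.abs (N z / D z) ≤ 1 := by
    intro z hz
    rw [map_div₀]
    exact div_le_one_of_le₀ (hle z hz) (Complex.abs.nonneg _)
  have hφle : ∀ z, Complex.abs z ≤ 1 → Complex.abs (φ z) ≤ 1 := by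
    intro z hz
    rw [hφmo z hz]
    exact mo_abs_le_one ha2 (hvabs z hz)
  have hφlt : ∀ z, Complex.abs z < 1 → Complex.abs (φ z) < 1 := by
    intro z hz
    rw [hφmo z hz.le]
    refine mo_abs_lt_one ha2 ?_
    rw [map_div₀, div_lt_one (Complex.abs.pos (hD0 z hz.le))]
    exact hltN z hz
  have hφeq : ∀ z, Complex.abs z = 1 → Complex.abs (φ z) = 1 := by
    intro z hz
    rw [hφmo z hz.le]
    refine mo_abs_eq_one ha2 ?_
    rw [map_div₀, heqN z hz, div_self (Complex.abs.ne_zero (hD0 z hz.le))]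
  have hiff : ∀ z w : ℂ, Complex.abs z ≤ 1 →
      (MvPolynomial.eval ![z, w] q = 0 ↔ w = φ z) := by
    intro z w hz
    rw [heval]
    have hQ := hQ0 z hz
    constructor
    · intro h
      have h2 : w * (D z - (starRingEnd ℂ) a.2 * N z) = a.2 * D z - N z := by
        linear_combination -h
      rw [hφ]
      exact (eq_div_iff hQ).mpr h2
    · intro h
      have h2 : w * (D z - (starRingEnd ℂ) a.2 * N z) = a.2 * D z - N z := by
        rw [h, hφ, div_mul_cancel₀ _ hQ]
      linear_combination -h2
  have hφa : φ a.1 = a.2 := by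
    rw [hφ]
    simp only [hNa, mul_zero, sub_zero]
    exact mul_div_cancel_right₀ _ (hD0 a.1 ha1.le)
  have hφb : φ b.1 = b.2 := by
    have hD := hD0 b.1 hb1.le
    have hv : N b.1 / D b.1 = mo a.2 b.2 := by
      rw [hvb, mul_div_cancel_right₀ _ hD]
    rw [hφmo b.1 hb1.le, hv]
    exact mo_invol ha2 hb2.le
  have haS : a ∈ zeroSet q ∩ openBidisk := by
    refine ⟨?_, ha1, ha2⟩
    show MvPolynomial.eval ![a.1, a.2] q = 0
    rw [hiff a.1 a.2 ha1.le, hφa]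
  -- continuity of the defining function of zeroSet q
  have hzc : zeroSet q = {p : ℂ × ℂ |
      (a.2 - p.2) * D p.1 - (1 - (starRingEnd ℂ) a.2 * p.2) * N p.1 = 0} := by
    ext p
    show MvPolynomial.eval ![p.1, p.2] q = 0 ↔ _
    rw [heval p.1 p.2]; rfl
  have hclosed : IsClosed (zeroSet q) := by
    rw [hzc]
    apply isClosed_eq _ continuous_const
    exact ((continuous_const.sub continuous_snd).mul (hDd.continuous.comp continuous_fst)).sub
      ((continuous_const.sub (continuous_const.mul continuous_snd)).mul
        (hNd.continuous.comp continuous_fst))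
  refine ⟨q, ⟨a, haS⟩, ?_, ?_⟩
  · -- frontier condition
    intro x hx
    have hxcl : x ∈ zeroSet q ∩ closedBidisk := by
      have h1 : closure (zeroSet q ∩ openBidisk) ⊆ zeroSet q ∩ closedBidisk := by
        apply closure_minimal _ (hclosed.inter isClosed_closedBidisk)
        intro y hy
        exact ⟨hy.1, hy.2.1.le, hy.2.2.le⟩
      exact h1 hx.1
    have hxq := hxcl.1
    have hx1 : Complex.abs x.1 ≤ 1 := hxcl.2.1
    have hx2 : Complex.abs x.2 ≤ 1 := hxcl.2.2
    have hxint : x ∉ openBidisk := by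
      intro hxo
      exact hx.2.2 (interior_maximal subset_rfl isOpen_openBidisk hxo)
    have hxw : x.2 = φ x.1 := (hiff x.1 x.2 hx1).mp hxq
    have hx1eq : Complex.abs x.1 = 1 := by
      rcases lt_or_eq_of_le hx1 with h | h
      · exact absurd ⟨h, by rw [hxw]; exact hφlt x.1 h⟩ hxint
      · exact h
    exact ⟨hx1eq, by rw [hxw]; exact hφeq x.1 hx1eq⟩
  · -- the inequality
    intro f hfc hfd hf1
    set g : ℂ → ℂ := fun z => f (z, φ z) with hg
    have hball : ∀ z : ℂ, z ∈ Metric.ball (0:ℂ) 1 ↔ Complex.abs z < 1 := by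
      intro z; rw [Metric.mem_ball, dist_zero_right]; rfl
    have hgd : DifferentiableOn ℂ g (Metric.ball 0 1) := by
      intro z hz
      have hz1 : Complex.abs z < 1 := (hball z).mp hz
      have hφd : DifferentiableAt ℂ φ z := by
        rw [hφ]
        exact (((differentiableAt_const a.2).mul (hDd z)).sub (hNd z)).div
          ((hDd z).sub ((differentiableAt_const _).mul (hNd z))) (hQ0 z hz1.le)
      have hmem : (z, φ z) ∈ openBidisk := ⟨hz1, hφlt z hz1⟩
      have hfz : DifferentiableAt ℂ f (z, φ z) :=
        (hfd _ hmem).differentiableAt (isOpen_openBidisk.mem_nhds hmem)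
      exact (hfz.comp z (differentiableAt_id.prodMk hφd)).differentiableWithinAt
    have hg1 : ∀ z ∈ Metric.ball (0:ℂ) 1, Complex.abs (g z) ≤ 1 := by
      intro z hz
      have hz1 : Complex.abs z < 1 := (hball z).mp hz
      apply hf1
      refine ⟨?_, hz1, hφlt z hz1⟩
      show MvPolynomial.eval ![z, φ z] q = 0
      rw [hiff z (φ z) hz1.le]
    have hsp := sp g hgd hg1 ha1 hb1
    have hga : g a.1 = f a := by rw [hg]; simp only [hφa, Prod.mk.eta]
    have hgb : g b.1 = f b := by rw [hg]; simp only [hφb, Prod.mk.eta]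
    rw [hga, hgb] at hsp
    calc Complex.abs (f a - f b)
        ≤ Complex.abs (a.1 - b.1) / Complex.abs (1 - (starRingEnd ℂ) a.1 * b.1)
          * Complex.abs (1 - (starRingEnd ℂ) (f a) * f b) := hsp
      _ ≤ _ := by
          apply mul_le_mul_of_nonneg_right (le_max_left _ _) (Complex.abs.nonneg _)


lemma main1 (a b : ℂ × ℂ) (ha1 : Complex.abs a.1 < 1) (ha2 : Complex.abs a.2 < 1)
    (hb1 : Complex.abs b.1 < 1) (hb2 : Complex.abs b.2 < 1)
    (hdle : Complex.abs (mo a.2 b.2) ≤ Complex.abs (mo a.1 b.1)) :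
    ∃ q : MvPolynomial (Fin 2) ℂ,
      (zeroSet q ∩ openBidisk).Nonempty ∧
      closure (zeroSet q ∩ openBidisk) ∩ frontier openBidisk ⊆ torus ∧
      ∀ f : ℂ × ℂ → ℂ, ContinuousOn f closedBidisk → DifferentiableOn ℂ f openBidisk →
        (∀ z ∈ zeroSet q ∩ openBidisk, Complex.abs (f z) ≤ 1) →
        Complex.abs (f a - f b) ≤
          max (Complex.abs (a.1 - b.1) / Complex.abs (1 - (starRingEnd ℂ) a.1 * b.1))
              (Complex.abs (a.2 - b.2) / Complex.abs (1 - (starRingEnd ℂ) a.2 * b.2)) *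
            Complex.abs (1 - (starRingEnd ℂ) (f a) * f b) := by
  classical
  set β := mo a.1 b.1 with hβdef
  set γ := mo a.2 b.2 with hγdef
  have hβ : Complex.abs β < 1 := mo_abs_lt_one ha1 hb1
  have hden1 : 1 - (starRingEnd ℂ) a.1 * b.1 ≠ 0 := mo_den_ne ha1 hb1.le
  rcases eq_or_lt_of_le hdle with hcase | hcase
  · -- rotation case : |γ| = |β|
    set c : ℂ := if β = 0 then 1 else γ / β with hcdef
    have hc : Complex.abs c = 1 := by
      rw [hcdef]
      split_ifs with h
      · simp
      · rw [map_div₀, hcase, div_self (Complex.abs.ne_zero h)]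
    have hγc : γ = c * β := by
      rw [hcdef]
      split_ifs with h
      · have : Complex.abs γ = 0 := by rw [hcase, h, map_zero]
        rw [Complex.abs.eq_zero] at this
        rw [this, h, mul_zero]
      · rw [div_mul_cancel₀ _ h]
    refine key a b ha1 ha2 hb1 hb2
      (fun z => c * (a.1 - z)) (fun z => 1 - (starRingEnd ℂ) a.1 * z)
      (MvPolynomial.C c * (MvPolynomial.C a.1 - MvPolynomial.X 0))
      (MvPolynomial.C 1 - MvPolynomial.C ((starRingEnd ℂ) a.1) * MvPolynomial.X 0)
      (by fun_prop) (by fun_prop) ?_ ?_ ?_ ?_ ?_ ?_ ?_ ?_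
    · intro z w; simp
    · intro z w; simp
    · intro z hz; exact mo_den_ne ha1 hz
    · intro z hz
      rw [map_mul, hc, one_mul]
      exact mo_abs_le ha1 hz
    · intro z hz
      rw [map_mul, hc, one_mul]
      exact mo_abs_lt ha1 hz
    · intro z hz
      rw [map_mul, hc, one_mul]
      exact mo_abs_eq hz
    · simp
    · rw [← hγdef, hγc, hβdef, mo, mul_assoc, div_mul_cancel₀ _ hden1]
  · -- Blaschke case : |γ| < |β|
    have hβ0 : β ≠ 0 := by
      intro h
      rw [h, map_zero] at hcase
      exact absurd hcase (not_lt.mpr (Complex.abs.nonneg γ))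
    set c : ℂ := γ / β with hcdef
    have hc : Complex.abs c < 1 := by
      rw [hcdef, map_div₀, div_lt_one (Complex.abs.pos hβ0)]
      exact hcase
    have hγc : γ = c * β := by rw [hcdef, div_mul_cancel₀ _ hβ0]
    set n : ℂ → ℂ := fun z => a.1 - z with hndef
    set d : ℂ → ℂ := fun z => 1 - (starRingEnd ℂ) a.1 * z with hddef
    set e : ℂ → ℂ := fun z => β * d z - n z with hedef
    set k : ℂ → ℂ := fun z => d z - (starRingEnd ℂ) β * n z with hkdef
    -- basic facts
    have hd0 : ∀ z, Complex.abs z ≤ 1 → d z ≠ 0 := fun z hz => mo_den_ne ha1 hz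
    have hnd : ∀ z, Complex.abs z ≤ 1 → Complex.abs (n z) ≤ Complex.abs (d z) :=
      fun z hz => mo_abs_le ha1 hz
    have hu : ∀ z, Complex.abs z ≤ 1 → n z / d z = mo a.1 z := fun z hz => rfl
    have humem : ∀ z, Complex.abs z ≤ 1 → Complex.abs (n z / d z) ≤ 1 :=
      fun z hz => mo_abs_le_one ha1 hz
    have hek : ∀ z, d z ≠ 0 → e z = d z * (β - n z / d z)
        ∧ k z = d z * (1 - (starRingEnd ℂ) β * (n z / d z)) := by
      intro z hdz
      constructor
      · show β * d z - n z = _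
        field_simp
      · show d z - (starRingEnd ℂ) β * n z = _
        field_simp
        try ring
    have hek_le : ∀ z, Complex.abs z ≤ 1 → Complex.abs (e z) ≤ Complex.abs (k z) := by
      intro z hz
      obtain ⟨h1, h2⟩ := hek z (hd0 z hz)
      rw [h1, h2, map_mul, map_mul]
      exact mul_le_mul_of_nonneg_left (mo_abs_le hβ (humem z hz)) (Complex.abs.nonneg _)
    have hek_eq : ∀ z, Complex.abs z = 1 → Complex.abs (e z) = Complex.abs (k z) := by
      intro z hz
      obtain ⟨h1, h2⟩ := hek z (hd0 z hz.le)
      have hu1 : Complex.abs (n z / d z) = 1 := by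
        rw [map_div₀]
        rw [mo_abs_eq hz]  -- |n z| = |d z| ?  n z = a.1 - z, d z = 1 - conj a.1 z
        exact div_self (Complex.abs.ne_zero (hd0 z hz.le))
      rw [h1, h2, map_mul, map_mul, mo_abs_eq hu1]
    have hk0 : ∀ z, Complex.abs z ≤ 1 → k z ≠ 0 := by
      intro z hz
      obtain ⟨_, h2⟩ := hek z (hd0 z hz)
      rw [h2]
      exact mul_ne_zero (hd0 z hz) (mo_den_ne hβ (humem z hz))
    have hsub : ∀ z, Complex.abs z ≤ 1 →
        Complex.abs (c * k z - e z) ≤ Complex.abs (k z - (starRingEnd ℂ) c * e z)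
        ∧ k z - (starRingEnd ℂ) c * e z ≠ 0 := by
      intro z hz
      have hk := hk0 z hz
      set w : ℂ := e z / k z with hwdef
      have hw : Complex.abs w ≤ 1 := by
        rw [hwdef, map_div₀]
        exact div_le_one_of_le₀ (hek_le z hz) (Complex.abs.nonneg _)
      have h1 : c * k z - e z = k z * (c - w) := by rw [hwdef]; field_simp
      have h2 : k z - (starRingEnd ℂ) c * e z = k z * (1 - (starRingEnd ℂ) c * w) := by
        rw [hwdef]; field_simp
      constructor
      · rw [h1, h2, map_mul, map_mul]
        exact mul_le_mul_of_nonneg_left (mo_abs_le hc hw) (Complex.abs.nonneg _)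
      · rw [h2]
        exact mul_ne_zero hk (mo_den_ne hc hw)
    refine key a b ha1 ha2 hb1 hb2
      (fun z => n z * (c * k z - e z)) (fun z => d z * (k z - (starRingEnd ℂ) c * e z))
      ((MvPolynomial.C a.1 - MvPolynomial.X 0) *
        (MvPolynomial.C c * ((MvPolynomial.C 1 - MvPolynomial.C ((starRingEnd ℂ) a.1) * MvPolynomial.X 0)
            - MvPolynomial.C ((starRingEnd ℂ) β) * (MvPolynomial.C a.1 - MvPolynomial.X 0))
          - (MvPolynomial.C β * (MvPolynomial.C 1 - MvPolynomial.C ((starRingEnd ℂ) a.1) * MvPolynomial.X 0)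
            - (MvPolynomial.C a.1 - MvPolynomial.X 0))))
      ((MvPolynomial.C 1 - MvPolynomial.C ((starRingEnd ℂ) a.1) * MvPolynomial.X 0) *
        (((MvPolynomial.C 1 - MvPolynomial.C ((starRingEnd ℂ) a.1) * MvPolynomial.X 0)
            - MvPolynomial.C ((starRingEnd ℂ) β) * (MvPolynomial.C a.1 - MvPolynomial.X 0))
          - MvPolynomial.C ((starRingEnd ℂ) c) *
            (MvPolynomial.C β * (MvPolynomial.C 1 - MvPolynomial.C ((starRingEnd ℂ) a.1) * MvPolynomial.X 0)
              - (MvPolynomial.C a.1 - MvPolynomial.X 0))))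
      ?_ ?_ ?_ ?_ ?_ ?_ ?_ ?_ ?_ ?_
    · rw [hndef, hkdef, hedef, hddef]; fun_prop
    · rw [hddef, hkdef, hedef, hndef]; fun_prop
    · intro z w
      simp only [hndef, hkdef, hedef, hddef]
      simp
      try ring
    · intro z w
      simp only [hndef, hkdef, hedef, hddef]
      simp
      try ring
    · intro z hz
      exact mul_ne_zero (hd0 z hz) (hsub z hz).2
    · intro z hz
      rw [map_mul, map_mul]
      exact mul_le_mul (hnd z hz) (hsub z hz).1 (Complex.abs.nonneg _) (Complex.abs.nonneg _)
    · intro z hz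
      rw [map_mul, map_mul]
      have h1 := (hsub z hz.le).1
      have h2 : 0 < Complex.abs (k z - (starRingEnd ℂ) c * e z) :=
        Complex.abs.pos (hsub z hz.le).2
      calc Complex.abs (n z) * Complex.abs (c * k z - e z)
          ≤ Complex.abs (n z) * Complex.abs (k z - (starRingEnd ℂ) c * e z) :=
            mul_le_mul_of_nonneg_left h1 (Complex.abs.nonneg _)
        _ < Complex.abs (d z) * Complex.abs (k z - (starRingEnd ℂ) c * e z) :=
            mul_lt_mul_of_pos_right (mo_abs_lt ha1 hz) h2
    · intro z hz
      rw [map_mul, map_mul]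
      have hn_eq : Complex.abs (n z) = Complex.abs (d z) := mo_abs_eq hz
      have hkz := hk0 z hz.le
      have hw1 : Complex.abs (e z / k z) = 1 := by
        rw [map_div₀, hek_eq z hz, div_self (Complex.abs.ne_zero hkz)]
      have h1 : c * k z - e z = k z * (c - e z / k z) := by field_simp
      have h2 : k z - (starRingEnd ℂ) c * e z
          = k z * (1 - (starRingEnd ℂ) c * (e z / k z)) := by field_simp
      rw [hn_eq, h1, h2, map_mul, map_mul, mo_abs_eq hw1]
    · rw [hndef]; simp
    · -- N b.1 = γ * D b.1
      have hnb : n b.1 = β * d b.1 := by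
        have : β = n b.1 / d b.1 := rfl
        rw [this, div_mul_cancel₀ _ (hd0 b.1 hb1.le)]
      have heb : e b.1 = 0 := by
        show β * d b.1 - n b.1 = 0
        rw [hnb]; ring
      show n b.1 * (c * k b.1 - e b.1) = mo a.2 b.2 * (d b.1 * (k b.1 - (starRingEnd ℂ) c * e b.1))
      rw [← hγdef, hγc, heb, hnb]
      ring

/-- **A Schwarz–Pick inequality on a distinguished variety of the bidisk (continuous case).** -/
theorem schwarz_pick_distinguished_variety (a b : ℂ × ℂ)
    (ha : a ∈ openBidisk) (hb : b ∈ openBidisk) :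
    ∃ q : MvPolynomial (Fin 2) ℂ,
      (zeroSet q ∩ openBidisk).Nonempty ∧
      closure (zeroSet q ∩ openBidisk) ∩ frontier openBidisk ⊆ torus ∧
      ∀ f : ℂ × ℂ → ℂ, ContinuousOn f closedBidisk → DifferentiableOn ℂ f openBidisk →
        (∀ z ∈ zeroSet q ∩ openBidisk, ‖f z‖ ≤ 1) →
        ‖f a - f b‖ ≤
          max (‖a.1 - b.1‖ / ‖1 - (starRingEnd ℂ) a.1 * b.1‖)
              (‖a.2 - b.2‖ / ‖1 - (starRingEnd ℂ) a.2 * b.2‖) *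
            ‖1 - (starRingEnd ℂ) (f a) * f b‖ := by
  obtain ⟨ha1, ha2⟩ := ha
  obtain ⟨hb1, hb2⟩ := hb
  rcases le_or_gt (Complex.abs (mo a.2 b.2)) (Complex.abs (mo a.1 b.1)) with h | h
  · exact main1 a b ha1 ha2 hb1 hb2 h
  · obtain ⟨q', h1, h2, h3⟩ := main1 (a.2, a.1) (b.2, b.1) ha2 ha1 hb2 hb1 h.le
    set q : MvPolynomial (Fin 2) ℂ := MvPolynomial.rename (Equiv.swap 0 1) q' with hqdef
    have hzs : ∀ z : ℂ × ℂ, z ∈ zeroSet q ↔ (z.2, z.1) ∈ zeroSet q' := by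
      intro z
      show MvPolynomial.eval ![z.1, z.2] (MvPolynomial.rename (Equiv.swap 0 1) q') = 0
        ↔ MvPolynomial.eval ![z.2, z.1] q' = 0
      rw [MvPolynomial.eval_rename]
      have : ![z.1, z.2] ∘ (Equiv.swap (0 : Fin 2) 1) = ![z.2, z.1] := by
        funext i
        fin_cases i <;> simp [Equiv.swap_apply_left, Equiv.swap_apply_right]
      rw [this]
    have hset : zeroSet q ∩ openBidisk = Prod.swap ⁻¹' (zeroSet q' ∩ openBidisk) := by
      ext z
      constructor
      · intro hz
        exact ⟨(hzs z).mp hz.1, hz.2.2, hz.2.1⟩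
      · intro hz
        exact ⟨(hzs z).mpr hz.1, hz.2.2, hz.2.1⟩
    have hopen : openBidisk = Prod.swap ⁻¹' openBidisk := by
      ext z
      exact ⟨fun hz => ⟨hz.2, hz.1⟩, fun hz => ⟨hz.2, hz.1⟩⟩
    have H : ℂ × ℂ ≃ₜ ℂ × ℂ := Homeomorph.prodComm ℂ ℂ
    have hpre : ∀ s : Set (ℂ × ℂ), closure (Prod.swap ⁻¹' s) = Prod.swap ⁻¹' closure s := by
      intro s
      have := (Homeomorph.prodComm ℂ ℂ).preimage_closure s
      simpa using this.symm
    have hfro : frontier openBidisk = Prod.swap ⁻¹' frontier openBidisk := by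
      conv_lhs => rw [hopen]
      have := (Homeomorph.prodComm ℂ ℂ).preimage_frontier openBidisk
      simpa using this.symm
    refine ⟨q, ?_, ?_, ?_⟩
    · obtain ⟨x, hx⟩ := h1
      refine ⟨(x.2, x.1), ?_⟩
      rw [hset]
      show (x.1, x.2) ∈ zeroSet q' ∩ openBidisk
      rw [Prod.mk.eta]
      exact hx
    · intro y hy
      have hy1 : y ∈ Prod.swap ⁻¹' closure (zeroSet q' ∩ openBidisk) := by
        rw [← hpre, ← hset]; exact hy.1
      have hy2 : y ∈ Prod.swap ⁻¹' frontier openBidisk := by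
        rw [← hfro]; exact hy.2
      have := h2 ⟨hy1, hy2⟩
      exact ⟨this.2, this.1⟩
    · intro f hfc hfd hf1
      set f' : ℂ × ℂ → ℂ := fun z => f (z.2, z.1) with hf'def
      have hswc : Continuous (fun z : ℂ × ℂ => ((z.2, z.1) : ℂ × ℂ)) :=
        continuous_snd.prodMk continuous_fst
      have hfc' : ContinuousOn f' closedBidisk := by
        apply hfc.comp hswc.continuousOn
        intro z hz
        exact ⟨hz.2, hz.1⟩
      have hfd' : DifferentiableOn ℂ f' openBidisk := by
        intro z hz
        have hz' : ((z.2, z.1) : ℂ × ℂ) ∈ openBidisk := ⟨hz.2, hz.1⟩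
        have hfz : DifferentiableAt ℂ f (z.2, z.1) :=
          (hfd _ hz').differentiableAt (isOpen_openBidisk.mem_nhds hz')
        exact (hfz.comp z (differentiableAt_snd.prodMk differentiableAt_fst)).differentiableWithinAt
      have hf1' : ∀ z ∈ zeroSet q' ∩ openBidisk, Complex.abs (f' z) ≤ 1 := by
        intro z hz
        apply hf1 (z.2, z.1)
        constructor
        · rw [hzs (z.2, z.1)]
          show (z.1, z.2) ∈ zeroSet q'
          rw [Prod.mk.eta]
          exact hz.1
        · exact ⟨hz.2.2, hz.2.1⟩
      have := h3 f' hfc' hfd' hf1'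
      have e1 : f' (a.2, a.1) = f a := by show f (a.1, a.2) = f a; rw [Prod.mk.eta]
      have e2 : f' (b.2, b.1) = f b := by show f (b.1, b.2) = f b; rw [Prod.mk.eta]
      rw [e1, e2] at this
      simpa [max_comm, Complex.abs_eq_norm] using this
end
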